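/- arXiv:1303.3980 — 5 statements merged into one kernel-verified Lean document; each statement's English description precedes it below -/
import Mathlib

section
/- Let k ≥ 1 and let ζ_j > −1, α_j > 0 be real numbers for j = 1,…,k. Let φ : ℝ^k → ℝ be the product of independent type-1 beta densities with parameters (ζ_j+1, α_j), i.e. φ(x) = ∏_{j=1}^k [Γ(α_j+ζ_j+1)/(Γ(ζ_j+1)Γ(α_j))] x_j^{ζ_j}(1−x_j)^{α_j−1} for x ∈ (0,1)^k and φ(x) = 0 otherwise, and let f : ℝ^k → [0,∞) be a measurable probability density vanishing outside (0,∞)^k. Then the pushforward of the product measure (volume.withDensity φ) ⊗ (volume.withDensity f) on ℝ^k × ℝ^k under the map (x, v) ↦ (x_1 v_1, …, x_k v_k) equals volume.withDensity g, where for u ∈ (0,∞)^k, g(u) = ∏_{j=1}^k [Γ(α_j+ζ_j+1)/Γ(ζ_j+1)] · (K^{(ζ,α)} f)(u), with K^{(ζ,α)} the multivariable Kober fractional integral operator of the second kind; equivalently, ∏_{j=1}^k [Γ(ζ_j+1)/Γ(α_j+ζ_j+1)] · g(u) = (K^{(ζ,α)} f)(u) for almost every u ∈ (0,∞)^k. 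-/
open MeasureTheory Real Set
open scoped ENNReal

private lemma my_measurable_rpow_const (c : ℝ) : Measurable fun x : ℝ => x ^ c := by
  have h1 : Measurable fun x : ℝ => Real.exp (Real.log x * c) * Real.cos (c * π) :=
    ((Real.measurable_log.mul measurable_const).exp.mul measurable_const)
  have h2 : Measurable (Set.piecewise ({0} : Set ℝ) (fun _ => (0:ℝ) ^ c)
      (fun x => Real.exp (Real.log x * c))) :=
    Measurable.piecewise (measurableSet_singleton 0) measurable_const
      (Real.measurable_log.mul measurable_const).exp
  have heq : (fun x : ℝ => x ^ c) = Set.piecewise (Set.Iio (0:ℝ))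
      (fun x => Real.exp (Real.log x * c) * Real.cos (c * π))
      (Set.piecewise ({0} : Set ℝ) (fun _ => (0:ℝ) ^ c)
        (fun x => Real.exp (Real.log x * c))) := by
    ext x
    rcases lt_trichotomy x 0 with hx | hx | hx
    · rw [Set.piecewise_eq_of_mem _ _ _ (by simpa using hx), Real.rpow_def_of_neg hx]
    · subst hx
      rw [Set.piecewise_eq_of_notMem _ _ _ (by simp),
        Set.piecewise_eq_of_mem _ _ _ (by simp)]
    · rw [Set.piecewise_eq_of_notMem _ _ _ (by simp [not_lt, hx.le]),
        Set.piecewise_eq_of_notMem _ _ _ (by simp [hx.ne']),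
        Real.rpow_def_of_pos hx]
  rw [heq]
  exact Measurable.piecewise measurableSet_Iio h1 h2

private lemma beta_integrableOn {a b : ℝ} (ha : -1 < a) (hb : 0 < b) :
    IntegrableOn (fun x : ℝ => x ^ a * (1 - x) ^ (b - 1)) (Set.Ioo 0 1) := by
  have h := (Complex.betaIntegral_convergent (u := (a + 1 : ℂ)) (v := (b : ℂ))
    (by simp; linarith) (by simpa using hb)).norm
  rw [intervalIntegrable_iff_integrableOn_Ioc_of_le zero_le_one] at h
  refine (IntegrableOn.mono_set h Set.Ioo_subset_Ioc_self).congr_fun ?_ measurableSet_Ioo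
  intro x hx
  obtain ⟨hx0, hx1⟩ := hx
  simp only [norm_mul]
  have h1 : ((a:ℂ) + 1 - 1) = (a : ℂ) := by ring
  rw [h1, show (1 - (x:ℂ)) = ((1 - x : ℝ) : ℂ) by push_cast; ring,
    Complex.norm_cpow_eq_rpow_re_of_pos hx0, Complex.norm_cpow_eq_rpow_re_of_pos (by linarith)]
  norm_num

private lemma lintegral_comp_mul_diag {k : ℕ} (v : Fin k → ℝ) (hv : ∀ j, 0 < v j)
    (H : (Fin k → ℝ) → ℝ≥0∞) (hH : Measurable H) :
    ∫⁻ x : Fin k → ℝ, H (fun j => x j * v j) = ENNReal.ofReal ((∏ j, v j)⁻¹) * ∫⁻ u, H u := by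
  have hprod : 0 < ∏ j, v j := Finset.prod_pos fun j _ => hv j
  set L := Matrix.toLin' (Matrix.diagonal v) with hLdef
  have hdet : LinearMap.det L = ∏ j, v j := by
    rw [hLdef, LinearMap.det_toLin', Matrix.det_diagonal]
  have hL : ∀ x : Fin k → ℝ, L x = fun j => x j * v j := by
    intro x
    funext j
    simp [hLdef, Matrix.toLin'_apply, Matrix.mulVec_diagonal, mul_comm]
  have hLmeas : Measurable L := L.continuous_of_finiteDimensional.measurable
  have h1 : ∫⁻ x : Fin k → ℝ, H (fun j => x j * v j) = ∫⁻ x, H (L x) := by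
    refine lintegral_congr fun x => ?_
    rw [hL]
  rw [h1, ← lintegral_map hH hLmeas,
    Real.map_linearMap_volume_pi_eq_smul_volume_pi (by rw [hdet]; exact hprod.ne'),
    hdet, lintegral_smul_measure, abs_of_pos (inv_pos.2 hprod), smul_eq_mul]

private lemma factor_eq {ζ α u v : ℝ} (hu : 0 < u) (huv : u < v) :
    (u / v) ^ ζ * (1 - u / v) ^ (α - 1) * v⁻¹ = u ^ ζ * ((v - u) ^ (α - 1) * v ^ (-ζ - α)) := by
  have hv : 0 < v := hu.trans huv
  have h1 : 1 - u / v = (v - u) / v := by field_simp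
  rw [h1, Real.div_rpow hu.le hv.le, Real.div_rpow (by linarith) hv.le,
    show (-ζ - α) = -(ζ + (α - 1) + 1) by ring, Real.rpow_neg hv.le,
    Real.rpow_add hv, Real.rpow_add hv, Real.rpow_one]
  have h2 : v ^ ζ ≠ 0 := (Real.rpow_pos_of_pos hv _).ne'
  have h3 : v ^ (α - 1) ≠ 0 := (Real.rpow_pos_of_pos hv _).ne'
  field_simp

/-- The multivariable Kober fractional integral operator of the second kind with
parameters `(ζ j, α j)`, `j = 1,…,k`. -/
noncomputable def kober2 {k : ℕ} (ζ α : Fin k → ℝ) (f : (Fin k → ℝ) → ℝ)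
    (u : Fin k → ℝ) : ℝ :=
  (∏ j, u j ^ ζ j / Real.Gamma (α j)) *
    ∫ v in {v : Fin k → ℝ | ∀ j, u j < v j},
      (∏ j, (v j - u j) ^ (α j - 1) * v j ^ (-ζ j - α j)) * f v

/-- Theorem 1.1: if `x_1,…,x_k` are independent type-1 beta variables with parameters
`(ζ_j+1, α_j)` and `(v_1,…,v_k)` has an arbitrary joint density `f` on the positive
orthant, independent of the `x_j`, then the joint density `g` of `u_j = x_j v_j`
satisfies `(∏ Γ(ζ_j+1)/Γ(α_j+ζ_j+1)) g(u) = (K^{(ζ,α)} f)(u)` on the positive orthant. -/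
theorem kober2_as_density_beta {k : ℕ} (hk : 1 ≤ k) (ζ α : Fin k → ℝ)
    (hζ : ∀ j, -1 < ζ j) (hα : ∀ j, 0 < α j)
    (f : (Fin k → ℝ) → ℝ) (hf_meas : Measurable f) (hf_nonneg : ∀ x, 0 ≤ f x)
    (hf_supp : ∀ x, ¬ (∀ j, 0 < x j) → f x = 0)
    (hf_int : ∫⁻ x, ENNReal.ofReal (f x) = 1) :
    Measure.map (fun p : (Fin k → ℝ) × (Fin k → ℝ) => fun j => p.1 j * p.2 j)
      ((volume.withDensity (fun x => ENNReal.ofReal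
          (Set.indicator {x : Fin k → ℝ | ∀ j, 0 < x j ∧ x j < 1}
            (fun x => ∏ j, Real.Gamma (α j + ζ j + 1) /
              (Real.Gamma (ζ j + 1) * Real.Gamma (α j)) *
                (x j ^ ζ j * (1 - x j) ^ (α j - 1))) x))).prod
        (volume.withDensity fun v => ENNReal.ofReal (f v)))
    = volume.withDensity fun u => ENNReal.ofReal
        (Set.indicator {u : Fin k → ℝ | ∀ j, 0 < u j}
          (fun u => (∏ j, Real.Gamma (α j + ζ j + 1) / Real.Gamma (ζ j + 1)) *
            kober2 ζ α f u) u) := by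
  classical
  -- abbreviations
  set c : Fin k → ℝ := fun j => Real.Gamma (α j + ζ j + 1) /
    (Real.Gamma (ζ j + 1) * Real.Gamma (α j)) with hc_def
  have hc_pos : ∀ j, 0 < c j := fun j => div_pos
    (Real.Gamma_pos_of_pos (by linarith [hζ j, hα j]))
    (mul_pos (Real.Gamma_pos_of_pos (by linarith [hζ j])) (Real.Gamma_pos_of_pos (hα j)))
  set S : Set (Fin k → ℝ) := {x | ∀ j, 0 < x j ∧ x j < 1} with hS_def
  set P : Set (Fin k → ℝ) := {u | ∀ j, 0 < u j} with hP_def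
  have hSmeas : MeasurableSet S := by
    have : S = ⋂ j, (fun x : Fin k → ℝ => x j) ⁻¹' (Set.Ioo 0 1) := by
      ext x; simp [hS_def, Set.mem_Ioo]
    rw [this]
    exact MeasurableSet.iInter fun j => (measurable_pi_apply j) measurableSet_Ioo
  have hPmeas : MeasurableSet P := by
    have : P = ⋂ j, (fun x : Fin k → ℝ => x j) ⁻¹' (Set.Ioi 0) := by
      ext x; simp [hP_def]
    rw [this]
    exact MeasurableSet.iInter fun j => (measurable_pi_apply j) measurableSet_Ioi
  set φ : (Fin k → ℝ) → ℝ := Set.indicator S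
    (fun x => ∏ j, c j * (x j ^ ζ j * (1 - x j) ^ (α j - 1))) with hφ_def
  set Φ : (Fin k → ℝ) → ℝ≥0∞ := fun x => ENNReal.ofReal (φ x) with hΦ_def
  set F : (Fin k → ℝ) → ℝ≥0∞ := fun v => ENNReal.ofReal (f v) with hF_def
  have hφmeas : Measurable φ := by
    refine Measurable.indicator ?_ hSmeas
    refine Finset.measurable_prod _ fun j _ => measurable_const.mul ?_
    exact ((my_measurable_rpow_const (ζ j)).comp (measurable_pi_apply j)).mul
      ((my_measurable_rpow_const (α j - 1)).comp (measurable_const.sub (measurable_pi_apply j)))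
  have hΦmeas : Measurable Φ := hφmeas.ennreal_ofReal
  have hFmeas : Measurable F := hf_meas.ennreal_ofReal
  set μ : Measure (Fin k → ℝ) := volume.withDensity Φ with hμ_def
  set ν : Measure (Fin k → ℝ) := volume.withDensity F with hν_def
  -- finiteness of μ and ν
  have hφ_nonneg : ∀ x, 0 ≤ φ x := by
    intro x
    refine Set.indicator_nonneg (fun x hx => ?_) x
    exact Finset.prod_nonneg fun j _ => mul_nonneg (hc_pos j).le
      (mul_nonneg (Real.rpow_nonneg (hx j).1.le _)
        (Real.rpow_nonneg (by linarith [(hx j).2]) _))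
  have hφ_int : Integrable φ := by
    have heach : ∀ j, Integrable (Set.indicator (Set.Ioo (0:ℝ) 1)
        (fun t => c j * (t ^ ζ j * (1 - t) ^ (α j - 1)))) volume := by
      intro j
      rw [integrable_indicator_iff measurableSet_Ioo]
      exact (beta_integrableOn (hζ j) (hα j)).const_mul (c j)
    have hprod := MeasureTheory.Integrable.fin_nat_prod (𝕜 := ℝ)
      (f := fun j => Set.indicator (Set.Ioo (0:ℝ) 1)
        (fun t => c j * (t ^ ζ j * (1 - t) ^ (α j - 1)))) heach
    refine hprod.congr (Filter.Eventually.of_forall fun x => ?_)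
    by_cases hx : x ∈ S
    · rw [hφ_def, Set.indicator_of_mem hx]
      exact Finset.prod_congr rfl fun j _ =>
        Set.indicator_of_mem (Set.mem_Ioo.2 (hx j)) _
    · rw [hφ_def, Set.indicator_of_notMem hx]
      obtain ⟨j0, hj0⟩ := not_forall.1 hx
      exact Finset.prod_eq_zero (Finset.mem_univ j0)
        (Set.indicator_of_notMem (by simpa [Set.mem_Ioo] using hj0) _)
  haveI : IsFiniteMeasure μ := by
    constructor
    rw [hμ_def, withDensity_apply _ MeasurableSet.univ, Measure.restrict_univ]
    exact lt_top_iff_ne_top.2 ((lintegral_ofReal_ne_top_iff_integrable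
      hφ_int.aestronglyMeasurable (Filter.Eventually.of_forall hφ_nonneg)).2 hφ_int)
  haveI : IsFiniteMeasure ν := by
    constructor
    rw [hν_def, withDensity_apply _ MeasurableSet.univ, Measure.restrict_univ, hf_int]
    exact ENNReal.one_lt_top
  -- the multiplication map and the kernel density
  set T : (Fin k → ℝ) × (Fin k → ℝ) → (Fin k → ℝ) :=
    fun p => fun j => p.1 j * p.2 j with hT_def
  have hTmeas : Measurable T := measurable_pi_lambda _ fun j =>
    ((measurable_pi_apply j).comp measurable_fst).mul
      ((measurable_pi_apply j).comp measurable_snd)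
  set D : (Fin k → ℝ) × (Fin k → ℝ) → ℝ≥0∞ := fun p =>
    F p.1 * (Φ (fun j => p.2 j / p.1 j) * ENNReal.ofReal ((∏ j, p.1 j)⁻¹)) with hD_def
  have hDmeas : Measurable D := by
    refine (hFmeas.comp measurable_fst).mul (Measurable.mul (f := fun p : (Fin k → ℝ) × (Fin k → ℝ) => Φ (fun j => p.2 j / p.1 j)) (g := fun p : (Fin k → ℝ) × (Fin k → ℝ) => ENNReal.ofReal ((∏ j, p.1 j)⁻¹)) ?_ ?_)
    · exact hΦmeas.comp (measurable_pi_lambda _ fun j =>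
        ((measurable_pi_apply j).comp measurable_snd).div
          ((measurable_pi_apply j).comp measurable_fst))
    · exact ((Finset.measurable_prod _ fun j _ =>
        (measurable_pi_apply j).comp measurable_fst).inv).ennreal_ofReal
  set G : (Fin k → ℝ) → ℝ≥0∞ := fun u => ∫⁻ v, D (v, u) ∂volume with hG_def
  have hGmeas : Measurable G := hDmeas.lintegral_prod_left'
  -- key identity for every measurable set
  have key : ∀ s : Set (Fin k → ℝ), MeasurableSet s →
      Measure.map T (μ.prod ν) s = ∫⁻ u in s, G u ∂volume := by
    intro s hs
    set e : (Fin k → ℝ) → ℝ≥0∞ := s.indicator 1 with he_def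
    have he_meas : Measurable e := measurable_one.indicator hs
    rw [Measure.map_apply hTmeas hs]
    have h0 : (μ.prod ν) (T ⁻¹' s) = ∫⁻ p, e (T p) ∂(μ.prod ν) := by
      rw [← lintegral_indicator_one (hTmeas hs)]
      refine lintegral_congr fun p => ?_
      by_cases hp : T p ∈ s <;> simp [he_def, Set.indicator, hp]
    rw [h0, lintegral_prod (fun p => e (T p)) ((he_meas.comp hTmeas).aemeasurable)]
    have h1 : ∀ x, ∫⁻ v, e (T (x, v)) ∂ν = ∫⁻ v, F v * e (T (x, v)) ∂volume := by
      intro x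
      rw [hν_def, lintegral_withDensity_eq_lintegral_mul _ hFmeas
        (show Measurable fun v => e (T (x, v)) from
          he_meas.comp (hTmeas.comp measurable_prodMk_left))]
      rfl
    simp_rw [h1]
    rw [hμ_def, lintegral_withDensity_eq_lintegral_mul _ hΦmeas
      (show Measurable fun x => ∫⁻ v, F v * e (T (x, v)) ∂volume from
        Measurable.lintegral_prod_right'
          ((hFmeas.comp measurable_snd).mul (he_meas.comp hTmeas)))]
    have h2 : ∀ x, (Φ * fun x => ∫⁻ v, F v * e (T (x, v)) ∂volume) x
        = ∫⁻ v, Φ x * (F v * e (T (x, v))) ∂volume := by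
      intro x
      simp only [Pi.mul_apply]
      rw [lintegral_const_mul _ (show Measurable fun v => F v * e (T (x, v)) from
        (hFmeas).mul (he_meas.comp (hTmeas.comp measurable_prodMk_left)))]
    simp_rw [h2]
    rw [lintegral_lintegral_swap (Measurable.aemeasurable
      (show Measurable (Function.uncurry fun x v => Φ x * (F v * e (T (x, v)))) from
        (hΦmeas.comp measurable_fst).mul ((hFmeas.comp measurable_snd).mul
          (he_meas.comp hTmeas))))]
    have h3 : ∀ v : Fin k → ℝ, ∫⁻ x : Fin k → ℝ, Φ x * (F v * e (T (x, v))) ∂volume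
        = ∫⁻ u, e u * D (v, u) ∂volume := by
      intro v
      by_cases hv : ∀ j, 0 < v j
      · set H : (Fin k → ℝ) → ℝ≥0∞ := fun u => Φ (fun j => u j / v j) * (F v * e u)
          with hH_def
        have hHmeas : Measurable H := by
          refine Measurable.mul ?_ (measurable_const.mul he_meas)
          exact hΦmeas.comp (measurable_pi_lambda _ fun j =>
            (measurable_pi_apply j).div measurable_const)
        have hstep : ∀ x : Fin k → ℝ, Φ x * (F v * e (T (x, v)))
            = H (fun j => x j * v j) := by
          intro x
          have hxv : (fun j => (x j * v j) / v j) = x :=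
            funext fun j => mul_div_cancel_right₀ (x j) (hv j).ne'
          rw [hH_def]
          simp only []
          rw [hxv]
        simp_rw [hstep]
        rw [lintegral_comp_mul_diag v hv H hHmeas, ← lintegral_const_mul _ hHmeas]
        refine lintegral_congr fun u => ?_
        rw [hH_def, hD_def]
        simp only []
        ring
      · have hFv : F v = 0 := by
          rw [hF_def]
          simp [hf_supp v hv]
        simp [hFv, hD_def]
    simp_rw [h3]
    rw [lintegral_lintegral_swap (Measurable.aemeasurable
      (show Measurable (Function.uncurry fun v u => e u * D (v, u)) from
        (he_meas.comp measurable_snd).mul hDmeas))]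
    have h4 : ∀ u, ∫⁻ v, e u * D (v, u) ∂volume = e u * G u := by
      intro u
      rw [hG_def]
      exact lintegral_const_mul _ (hDmeas.comp (measurable_id.prodMk measurable_const))
    simp_rw [h4]
    rw [← lintegral_indicator hs]
    refine lintegral_congr fun u => ?_
    by_cases hu : u ∈ s
    · rw [Set.indicator_of_mem hu, he_def, Set.indicator_of_mem hu, Pi.one_apply, one_mul]
    · rw [Set.indicator_of_notMem hu, he_def, Set.indicator_of_notMem hu, zero_mul]
  have main : Measure.map T (μ.prod ν) = volume.withDensity G := by
    ext s hs
    rw [key s hs, withDensity_apply _ hs]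
  have hGfin : ∀ᵐ u : Fin k → ℝ, G u < ∞ := by
    refine ae_lt_top hGmeas ?_
    have h := key Set.univ MeasurableSet.univ
    rw [Measure.map_apply hTmeas MeasurableSet.univ, Set.preimage_univ,
      Measure.restrict_univ] at h
    rw [← h]
    exact measure_ne_top _ _
  have hae : G =ᵐ[volume] fun u => ENNReal.ofReal
      (Set.indicator P (fun u => (∏ j, Real.Gamma (α j + ζ j + 1) / Real.Gamma (ζ j + 1)) *
        kober2 ζ α f u) u) := by
    filter_upwards [hGfin] with u hGu
    by_cases hup : ∀ j, 0 < u j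
    · -- positive orthant
      have hQmeas : MeasurableSet {v : Fin k → ℝ | ∀ j, u j < v j} := by
        have : {v : Fin k → ℝ | ∀ j, u j < v j}
            = ⋂ j, (fun v : Fin k → ℝ => v j) ⁻¹' (Set.Ioi (u j)) := by
          ext v; simp
        rw [this]
        exact MeasurableSet.iInter fun j => (measurable_pi_apply j) measurableSet_Ioi
      set A : ℝ := ∏ j, c j * u j ^ ζ j with hA_def
      have hA_pos : 0 < A := Finset.prod_pos fun j _ =>
        mul_pos (hc_pos j) (Real.rpow_pos_of_pos (hup j) _)
      set w : (Fin k → ℝ) → ℝ :=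
        fun v => (∏ j, (v j - u j) ^ (α j - 1) * v j ^ (-ζ j - α j)) * f v with hw_def
      have hwmeas : Measurable w := by
        refine Measurable.mul ?_ hf_meas
        refine Finset.measurable_prod _ fun j _ => Measurable.mul ?_ ?_
        · exact (my_measurable_rpow_const _).comp ((measurable_pi_apply j).sub measurable_const)
        · exact (my_measurable_rpow_const _).comp (measurable_pi_apply j)
      set ψ : (Fin k → ℝ) → ℝ := Set.indicator {v : Fin k → ℝ | ∀ j, u j < v j} w with hψ_def
      have hψmeas : Measurable ψ := hwmeas.indicator hQmeas
      have hw_nonneg : ∀ v ∈ {v : Fin k → ℝ | ∀ j, u j < v j}, 0 ≤ w v := by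
        intro v hv
        refine mul_nonneg (Finset.prod_nonneg fun j _ => mul_nonneg ?_ ?_) (hf_nonneg v)
        · exact Real.rpow_nonneg (by linarith [hv j]) _
        · exact Real.rpow_nonneg (by linarith [hup j, hv j]) _
      have hD_eq : ∀ v, D (v, u) = ENNReal.ofReal A * ENNReal.ofReal (ψ v) := by
        intro v
        by_cases hvu : ∀ j, u j < v j
        · have hv : ∀ j, 0 < v j := fun j => (hup j).trans (hvu j)
          have hmemS : (fun j => u j / v j) ∈ S := by
            intro j
            exact ⟨div_pos (hup j) (hv j), (div_lt_one (hv j)).2 (hvu j)⟩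
          have hprod_nonneg : 0 ≤ ∏ j, c j * ((u j / v j) ^ ζ j *
              (1 - u j / v j) ^ (α j - 1)) :=
            Finset.prod_nonneg fun j _ => mul_nonneg (hc_pos j).le
              (mul_nonneg (Real.rpow_nonneg (div_pos (hup j) (hv j)).le _)
                (Real.rpow_nonneg (by linarith [(div_lt_one (hv j)).2 (hvu j)]) _))
          rw [hD_def]
          simp only []
          rw [hΦ_def]
          simp only []
          rw [hφ_def, Set.indicator_of_mem hmemS, hψ_def, Set.indicator_of_mem (show v ∈ {v : Fin k → ℝ | ∀ j, u j < v j} from hvu), hF_def]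
          simp only []
          rw [← ENNReal.ofReal_mul hprod_nonneg, ← ENNReal.ofReal_mul (hf_nonneg v),
            ← ENNReal.ofReal_mul hA_pos.le]
          congr 1
          rw [hA_def, hw_def]
          simp only []
          rw [← Finset.prod_inv_distrib, ← Finset.prod_mul_distrib]
          have per : ∀ j : Fin k, c j * ((u j / v j) ^ ζ j *
              (1 - u j / v j) ^ (α j - 1)) * (v j)⁻¹
              = c j * u j ^ ζ j * ((v j - u j) ^ (α j - 1) * v j ^ (-ζ j - α j)) := fun j => by
            linear_combination (c j) * factor_eq (hup j) (hvu j)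
          rw [Finset.prod_congr rfl fun j _ => per j, Finset.prod_mul_distrib]
          ring
        · have hψv : ψ v = 0 := Set.indicator_of_notMem (show v ∉ {v : Fin k → ℝ | ∀ j, u j < v j} from hvu) w
          rw [hψv, ENNReal.ofReal_zero, mul_zero]
          by_cases hv : ∀ j, 0 < v j
          · obtain ⟨j0, hj0⟩ := not_forall.1 hvu
            have hnot : (fun j => u j / v j) ∉ S := by
              intro hmem
              exact hj0 ((div_lt_one (hv j0)).1 (hmem j0).2)
            rw [hD_def]
            simp only []
            rw [hΦ_def]
            simp only []
            rw [hφ_def, Set.indicator_of_notMem hnot]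
            simp
          · rw [hD_def]
            simp only []
            rw [hF_def]
            simp only []
            simp [hf_supp v hv]
      have hG_eq : G u = ENNReal.ofReal A * ∫⁻ v, ENNReal.ofReal (ψ v) ∂volume := by
        rw [hG_def]
        simp only []
        simp_rw [hD_eq]
        exact lintegral_const_mul _ hψmeas.ennreal_ofReal
      set Ψ : ℝ≥0∞ := ∫⁻ v, ENNReal.ofReal (ψ v) ∂volume with hΨ_def
      have hΨ_ne_top : Ψ ≠ ∞ := by
        intro htop
        have h2 := hGu
        rw [hG_eq, htop, ENNReal.mul_top
          (by simp [ENNReal.ofReal_eq_zero, not_le, hA_pos] : ENNReal.ofReal A ≠ 0)] at h2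
        exact absurd h2 (lt_irrefl _)
      have hΨ_int : Ψ = ∫⁻ v in {v : Fin k → ℝ | ∀ j, u j < v j},
          ENNReal.ofReal (w v) ∂volume := by
        rw [hΨ_def, ← lintegral_indicator hQmeas]
        refine lintegral_congr fun v => ?_
        by_cases hv : v ∈ {v : Fin k → ℝ | ∀ j, u j < v j}
        · rw [hψ_def, Set.indicator_of_mem hv, Set.indicator_of_mem hv]
        · rw [hψ_def, Set.indicator_of_notMem hv, Set.indicator_of_notMem hv,
            ENNReal.ofReal_zero]
      have hB : ∫ v in {v : Fin k → ℝ | ∀ j, u j < v j}, w v ∂volume = Ψ.toReal := by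
        rw [integral_eq_lintegral_of_nonneg_ae ((ae_restrict_iff' hQmeas).2
          (Filter.Eventually.of_forall hw_nonneg)) hwmeas.aestronglyMeasurable.restrict,
          hΨ_int]
      have hCA : (∏ j, Real.Gamma (α j + ζ j + 1) / Real.Gamma (ζ j + 1)) * kober2 ζ α f u
          = A * (∫ v in {v : Fin k → ℝ | ∀ j, u j < v j}, w v ∂volume) := by
        unfold kober2
        rw [hA_def, ← mul_assoc, ← Finset.prod_mul_distrib]
        congr 1
        refine Finset.prod_congr rfl fun j _ => ?_
        rw [hc_def]
        ring
      rw [Set.indicator_of_mem (show u ∈ P from hup)]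
      rw [hG_eq, hCA, hB, ENNReal.ofReal_mul hA_pos.le, ENNReal.ofReal_toReal hΨ_ne_top]
    · -- outside the orthant
      have hDzero : ∀ v, D (v, u) = 0 := by
        intro v
        by_cases hv : ∀ j, 0 < v j
        · obtain ⟨j0, hj0⟩ := not_forall.1 hup
          have hnot : (fun j => u j / v j) ∉ S := by
            intro hmem
            have h1 := (hmem j0).1
            have h2 := mul_pos h1 (hv j0)
            rw [div_mul_cancel₀ _ (hv j0).ne'] at h2
            exact hj0 h2
          rw [hD_def]
          simp only []
          rw [hΦ_def]
          simp only []
          rw [hφ_def, Set.indicator_of_notMem hnot]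
          simp
        · rw [hD_def]
          simp only []
          rw [hF_def]
          simp only []
          simp [hf_supp v hv]
      have hGzero : G u = 0 := by
        rw [hG_def]
        simp only []
        simp [hDzero]
      rw [hGzero, Set.indicator_of_notMem (show u ∉ P from hup), ENNReal.ofReal_zero]
  exact main.trans (withDensity_congr_ae hae)
end

section
/- Let k ≥ 1, and for j = 1,…,k let ζ_j, α_j, s_j be real numbers with ζ_j > 0, α_j > 0 and s_j < 1 + ζ_j. Let f : ℝ^k → [0,∞] be a measurable function vanishing outside (0,∞)^k. Then, with equality in [0,∞], the multivariable Mellin transform of the Kober operator of the first kind satisfies ∫_{(0,∞)^k} (∏_{j=1}^k u_j^{s_j−1}) (I^{(ζ,α)} f)(u) du = (∏_{j=1}^k Γ(1+ζ_j−s_j)/Γ(1+α_j+ζ_j−s_j)) · ∫_{(0,∞)^k} (∏_{j=1}^k v_j^{s_j−1}) f(v) dv. -/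
open MeasureTheory Real Set
open scoped ENNReal

/-- The multivariable Kober fractional integral operator of the first kind with
parameters `(ζ j, α j)`, acting on `[0,∞]`-valued functions. -/
noncomputable def kober1E {k : ℕ} (ζ α : Fin k → ℝ) (f : (Fin k → ℝ) → ℝ≥0∞)
    (u : Fin k → ℝ) : ℝ≥0∞ :=
  ENNReal.ofReal (∏ j, u j ^ (-ζ j - α j) / Real.Gamma (α j)) *
    ∫⁻ v in {v : Fin k → ℝ | ∀ j, 0 < v j ∧ v j < u j},
      ENNReal.ofReal (∏ j, (u j - v j) ^ (α j - 1) * v j ^ ζ j) * f v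

lemma beta_real {c a : ℝ} (hc : 0 < c) (ha : 0 < a) :
    ∫ t in (0:ℝ)..1, t ^ (c - 1) * (1 - t) ^ (a - 1)
      = Real.Gamma c * Real.Gamma a / Real.Gamma (c + a) := by
  have hG : Real.Gamma (c + a) ≠ 0 := (Real.Gamma_pos_of_pos (by linarith)).ne'
  have hB : Complex.betaIntegral c a
      = ((Real.Gamma c * Real.Gamma a / Real.Gamma (c + a) : ℝ) : ℂ) := by
    have h := Complex.Gamma_mul_Gamma_eq_betaIntegral
      (s := (c:ℂ)) (t := (a:ℂ)) (by simpa using hc) (by simpa using ha)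
    have hg : Complex.Gamma ((c:ℂ) + a) = (Real.Gamma (c + a) : ℂ) := by
      rw [← Complex.ofReal_add, Complex.Gamma_ofReal]
    rw [Complex.Gamma_ofReal, Complex.Gamma_ofReal, hg] at h
    have hg0 : (Real.Gamma (c + a) : ℂ) ≠ 0 := by exact_mod_cast hG
    push_cast; rw [eq_div_iff hg0]
    linear_combination -h
  have heq : ∫ t in (0:ℝ)..1, ((t ^ (c - 1) * (1 - t) ^ (a - 1) : ℝ) : ℂ)
      = Complex.betaIntegral c a := by
    rw [Complex.betaIntegral]
    refine intervalIntegral.integral_congr fun t ht => ?_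
    rw [Set.uIcc_of_le (by norm_num : (0:ℝ) ≤ 1)] at ht
    rw [Complex.ofReal_mul, Complex.ofReal_cpow ht.1, Complex.ofReal_cpow (by linarith [ht.2] : (0:ℝ) ≤ 1 - t)]
    push_cast
    ring
  rw [intervalIntegral.integral_ofReal] at heq
  rw [hB] at heq
  exact_mod_cast heq

lemma beta_integrable {c a : ℝ} (hc : 0 < c) (ha : 0 < a) :
    IntegrableOn (fun t : ℝ => t ^ (c - 1) * (1 - t) ^ (a - 1)) (Ioo 0 1) := by
  have h := (Complex.betaIntegral_convergent (u := (c:ℂ)) (v := (a:ℂ))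
    (by simpa using hc) (by simpa using ha)).norm
  have h2 : IntegrableOn (fun x : ℝ => ‖(x:ℂ) ^ ((c:ℂ) - 1) * (1 - (x:ℂ)) ^ ((a:ℂ) - 1)‖)
      (Ioo (0:ℝ) 1) := by
    have := (intervalIntegrable_iff_integrableOn_Ioc_of_le (by norm_num : (0:ℝ) ≤ 1)).mp h
    exact this.mono_set Ioo_subset_Ioc_self
  refine h2.congr_fun (fun t ht => ?_) measurableSet_Ioo
  have h1 : ((t ^ (c-1) : ℝ) : ℂ) = (t:ℂ) ^ ((c:ℂ) - 1) := by
    rw [Complex.ofReal_cpow ht.1.le]; push_cast; ring_nf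
  have h2' : (((1 - t) ^ (a-1) : ℝ) : ℂ) = (1 - (t:ℂ)) ^ ((a:ℂ) - 1) := by
    rw [Complex.ofReal_cpow (by linarith [ht.2] : (0:ℝ) ≤ 1 - t)]; push_cast; ring_nf
  beta_reduce; rw [← h1, ← h2', ← Complex.ofReal_mul, Complex.norm_real, Real.norm_of_nonneg]
  exact mul_nonneg (Real.rpow_nonneg ht.1.le _) (Real.rpow_nonneg (by linarith [ht.2]) _)

lemma beta_lintegral {c a : ℝ} (hc : 0 < c) (ha : 0 < a) :
    ∫⁻ t in Ioo (0:ℝ) 1, ENNReal.ofReal (t ^ (c - 1) * (1 - t) ^ (a - 1))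
      = ENNReal.ofReal (Real.Gamma c * Real.Gamma a / Real.Gamma (c + a)) := by
  rw [← ofReal_integral_eq_lintegral_ofReal (beta_integrable hc ha)
    ((ae_restrict_iff' measurableSet_Ioo).2 (ae_of_all _ fun t ht =>
      mul_nonneg (Real.rpow_nonneg ht.1.le _) (Real.rpow_nonneg (by linarith [ht.2]) _)))]
  · congr 1
    rw [← MeasureTheory.integral_Ioc_eq_integral_Ioo,
      ← intervalIntegral.integral_of_le (by norm_num : (0:ℝ) ≤ 1)]
    exact beta_real hc ha

lemma lintegral_image_abs_deriv {s : Set ℝ} {f : ℝ → ℝ} {f' : ℝ → ℝ}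
    (hs : MeasurableSet s) (hf' : ∀ x ∈ s, HasDerivWithinAt f (f' x) s x)
    (hf : InjOn f s) (g : ℝ → ℝ≥0∞) :
    ∫⁻ x in f '' s, g x = ∫⁻ x in s, ENNReal.ofReal |f' x| * g (f x) := by
  simpa only [ContinuousLinearMap.det_toSpanSingleton] using
    lintegral_image_eq_lintegral_abs_det_fderiv_mul volume hs
      (fun x hx => (hf' x hx).hasFDerivWithinAt) hf g

lemma key1 {c a v : ℝ} (hc : 0 < c) (ha : 0 < a) (hv : 0 < v) :
    ∫⁻ u in Ioi v, ENNReal.ofReal (u ^ (-(c + a)) * (u - v) ^ (a - 1))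
      = ENNReal.ofReal (v ^ (-c) * (Real.Gamma c * Real.Gamma a / Real.Gamma (c + a))) := by
  have himg : (fun t : ℝ => v / t) '' Ioo 0 1 = Ioi v := by
    ext y
    constructor
    · rintro ⟨t, ht, rfl⟩
      have : v < v / t := by
        rw [lt_div_iff₀ ht.1]
        nlinarith [ht.2]
      exact this
    · intro hy
      have hy0 : 0 < y := hv.trans hy
      refine ⟨v / y, ⟨by positivity, ?_⟩, ?_⟩
      · rw [div_lt_one hy0]; exact hy
      · field_simp
  have hderiv : ∀ t ∈ Ioo (0:ℝ) 1, HasDerivWithinAt (fun t => v / t) (-(v / t ^ 2)) (Ioo 0 1) t := by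
    intro t ht
    have h0 := ((hasDerivAt_inv ht.1.ne').const_mul v).hasDerivWithinAt (s := Ioo (0:ℝ) 1)
    have he : (fun t : ℝ => v / t) = fun t => v * t⁻¹ := funext fun x => div_eq_mul_inv v x
    rw [he]
    rw [show -(v / t ^ 2) = v * -(t ^ 2)⁻¹ by ring]
    exact h0
  have hinj : InjOn (fun t : ℝ => v / t) (Ioo 0 1) := by
    intro x hx y hy h
    simp only at h
    rw [div_eq_div_iff hx.1.ne' hy.1.ne'] at h
    exact (mul_left_cancel₀ hv.ne' h).symm
  rw [← himg, lintegral_image_abs_deriv measurableSet_Ioo hderiv hinj]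
  have hcong : ∀ t ∈ Ioo (0:ℝ) 1,
      ENNReal.ofReal |(-(v / t ^ 2))| * ENNReal.ofReal ((v / t) ^ (-(c + a)) * (v / t - v) ^ (a - 1))
        = ENNReal.ofReal (v ^ (-c)) * ENNReal.ofReal (t ^ (c - 1) * (1 - t) ^ (a - 1)) := by
    intro t ht
    obtain ⟨ht0, ht1⟩ := ht
    rw [← ENNReal.ofReal_mul (abs_nonneg _), ← ENNReal.ofReal_mul (Real.rpow_nonneg hv.le _)]
    congr 1
    have habs : |(-(v / t ^ 2))| = v / t ^ 2 := by
      rw [abs_neg, abs_of_nonneg]; positivity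
    have e1 : (v / t) ^ (-(c + a)) = v ^ (-(c + a)) / (t ^ (c + a))⁻¹ := by
      rw [Real.div_rpow hv.le ht0.le, Real.rpow_neg ht0.le (c + a)]
    have e2 : (v / t - v) ^ (a - 1) = v ^ (a - 1) * (1 - t) ^ (a - 1) * (t ^ (a - 1))⁻¹ := by
      have h3 : v / t - v = v * (1 - t) * t⁻¹ := by field_simp
      rw [h3, Real.mul_rpow (by nlinarith : (0:ℝ) ≤ v * (1 - t)) (by positivity),
        Real.mul_rpow hv.le (by linarith), Real.inv_rpow ht0.le]
    have hva : v ^ (-c) = v * (v ^ (-(c + a)) * v ^ (a - 1)) := by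
      rw [← Real.rpow_add hv, show -(c + a) + (a - 1) = -c - 1 by ring,
        Real.rpow_sub hv, Real.rpow_one]
      field_simp
    have hta : t ^ (c + a) = t ^ (c - 1) * t ^ (a - 1) * t ^ (2:ℕ) := by
      rw [← Real.rpow_natCast t 2, ← Real.rpow_add ht0, ← Real.rpow_add ht0]
      congr 1
      push_cast
      ring
    have h4 : (0:ℝ) < t ^ (a - 1) := Real.rpow_pos_of_pos ht0 _
    have h5 : (0:ℝ) < t ^ 2 := by positivity
    rw [habs, e1, e2, hva, hta]
    field_simp
  rw [setLIntegral_congr_fun measurableSet_Ioo hcong]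
  rw [lintegral_const_mul' _ _ ENNReal.ofReal_ne_top, beta_lintegral hc ha,
    ← ENNReal.ofReal_mul (Real.rpow_nonneg hv.le _)]

lemma key2 {z a s w : ℝ} (ha : 0 < a) (hs : s < 1 + z) (hw : 0 < w) :
    ∫⁻ x in Ioi w, ENNReal.ofReal (x ^ (s - 1)) * ENNReal.ofReal (x ^ (-z - a) / Real.Gamma a)
        * ENNReal.ofReal ((x - w) ^ (a - 1) * w ^ z)
      = ENNReal.ofReal (w ^ (s - 1) * (Real.Gamma (1 + z - s) / Real.Gamma (1 + a + z - s))) := by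
  set c := 1 + z - s with hcdef
  have hc : 0 < c := by simp only [hcdef]; linarith
  have hGa : 0 < Real.Gamma a := Real.Gamma_pos_of_pos ha
  have hstep : ∀ x ∈ Ioi w,
      ENNReal.ofReal (x ^ (s - 1)) * ENNReal.ofReal (x ^ (-z - a) / Real.Gamma a)
          * ENNReal.ofReal ((x - w) ^ (a - 1) * w ^ z)
        = ENNReal.ofReal (w ^ z / Real.Gamma a)
          * ENNReal.ofReal (x ^ (-(c + a)) * (x - w) ^ (a - 1)) := by
    intro x hx
    have hx0 : 0 < x := hw.trans hx
    rw [← ENNReal.ofReal_mul (Real.rpow_nonneg hx0.le _),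
      ← ENNReal.ofReal_mul (by positivity), ← ENNReal.ofReal_mul (by positivity)]
    congr 1
    have : x ^ (s - 1) * (x ^ (-z - a) / Real.Gamma a) = x ^ (-(c + a)) / Real.Gamma a := by
      rw [← mul_div_assoc, ← Real.rpow_add hx0]
      congr 2
      simp only [hcdef]; ring
    rw [this]
    ring
  rw [setLIntegral_congr_fun measurableSet_Ioi hstep,
    lintegral_const_mul' _ _ ENNReal.ofReal_ne_top, key1 hc ha hw,
    ← ENNReal.ofReal_mul (by positivity)]
  congr 1
  have hwc : w ^ z / Real.Gamma a * (w ^ (-c) * (Real.Gamma c * Real.Gamma a / Real.Gamma (c + a)))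
      = (w ^ z * w ^ (-c)) * (Real.Gamma c / Real.Gamma (c + a)) := by
    field_simp
  rw [hwc, ← Real.rpow_add hw]
  have h1 : z + -c = s - 1 := by simp only [hcdef]; ring
  have h2 : c + a = 1 + a + z - s := by simp only [hcdef]; ring
  rw [h1, h2, hcdef]

lemma lintegral_fin_prod : ∀ {k : ℕ} (f : Fin k → ℝ → ℝ≥0∞), (∀ i, Measurable (f i)) →
    ∫⁻ x : Fin k → ℝ, ∏ i, f i (x i) = ∏ i, ∫⁻ x : ℝ, f i x := by
  intro k
  induction k with
  | zero =>
      intro f _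
      simp [MeasureTheory.volume_pi, lintegral_const]
  | succ n ih =>
      intro f hf
      have hmp := ((measurePreserving_piFinSuccAbove (fun _ : Fin (n+1) => (volume : Measure ℝ))
        0).symm)
      rw [MeasureTheory.volume_pi,
        ← hmp.lintegral_comp_emb (MeasurableEquiv.measurableEmbedding _)]
      simp only [MeasurableEquiv.piFinSuccAbove_symm_apply, Fin.insertNthEquiv,
        Fin.prod_univ_succ, Fin.insertNth_zero, Equiv.coe_fn_mk, Fin.cons_succ,
        Fin.zero_succAbove, Fin.cons_zero, Function.comp_def, Nat.cast_id, cast_eq]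
      have hswap : ∫⁻ p : ℝ × (Fin n → ℝ),
          f 0 p.1 * ∏ i : Fin n, f i.succ (p.2 i)
            ∂((volume : Measure ℝ).prod (Measure.pi fun _ => (volume : Measure ℝ)))
          = (∫⁻ x : ℝ, f 0 x) * ∫⁻ y : Fin n → ℝ, ∏ i : Fin n, f i.succ (y i)
            ∂(Measure.pi fun _ => (volume : Measure ℝ)) := by
        exact lintegral_prod_mul (hf 0).aemeasurable
          (Finset.measurable_prod Finset.univ (fun (i : Fin n) (_ : i ∈ Finset.univ) =>
            ((hf i.succ).comp (measurable_pi_apply i)))).aemeasurable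
      rw [hswap]
      have := ih (fun i => f i.succ) (fun i => hf i.succ)
      rw [MeasureTheory.volume_pi] at this
      rw [this]

lemma lintegral_pi_prod {k : ℕ} (f : Fin k → ℝ → ℝ≥0∞) (hf : ∀ i, Measurable (f i))
    (S : Fin k → Set ℝ) (hS : ∀ i, MeasurableSet (S i)) :
    ∫⁻ x : Fin k → ℝ in Set.pi univ S, ∏ i, f i (x i) = ∏ i, ∫⁻ x in S i, f i x := by
  rw [← lintegral_indicator (MeasurableSet.univ_pi hS)]
  have hind : ∀ x : Fin k → ℝ, (Set.pi univ S).indicator (fun x => ∏ i, f i (x i)) x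
      = ∏ i, (S i).indicator (f i) (x i) := by
    intro x
    by_cases h : x ∈ Set.pi univ S
    · rw [Set.indicator_of_mem h]
      exact Finset.prod_congr rfl fun i _ => (Set.indicator_of_mem (h i trivial) _).symm
    · rw [Set.indicator_of_notMem h]
      obtain ⟨i, hi⟩ : ∃ i, x i ∉ S i := by simpa [Set.mem_pi] using h
      exact (Finset.prod_eq_zero (Finset.mem_univ i) (Set.indicator_of_notMem hi _)).symm
  simp_rw [hind]
  rw [lintegral_fin_prod _ (fun i => (hf i).indicator (hS i))]
  exact Finset.prod_congr rfl fun i _ => lintegral_indicator (hS i) _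

/-- Theorem 2.2: the multivariable Mellin transform of the Kober fractional integral
operator of the first kind:
`M{I^{(ζ,α)} f; s} = (∏ Γ(1+ζ_j−s_j)/Γ(1+α_j+ζ_j−s_j)) f*(s_1,…,s_k)`
for `ζ_j > 0`, `α_j > 0`, `s_j < 1 + ζ_j`. -/
theorem mellin_kober1 {k : ℕ} (hk : 1 ≤ k) (ζ α s : Fin k → ℝ)
    (hζ : ∀ j, 0 < ζ j) (hα : ∀ j, 0 < α j) (hs : ∀ j, s j < 1 + ζ j)
    (f : (Fin k → ℝ) → ℝ≥0∞) (hf_meas : Measurable f)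
    (hf_supp : ∀ x, ¬ (∀ j, 0 < x j) → f x = 0) :
    ∫⁻ u in {u : Fin k → ℝ | ∀ j, 0 < u j},
        ENNReal.ofReal (∏ j, u j ^ (s j - 1)) * kober1E ζ α f u
      = ENNReal.ofReal
          (∏ j, Real.Gamma (1 + ζ j - s j) / Real.Gamma (1 + α j + ζ j - s j)) *
          ∫⁻ v in {v : Fin k → ℝ | ∀ j, 0 < v j},
            ENNReal.ofReal (∏ j, v j ^ (s j - 1)) * f v := by
  classical
  set P : Set (Fin k → ℝ) := {u : Fin k → ℝ | ∀ j, 0 < u j} with hPdef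
  have hP : MeasurableSet P := by
    have : P = Set.pi univ (fun _ => Ioi (0:ℝ)) := by
      ext u; simp [hPdef, Set.mem_pi]
    rw [this]; exact MeasurableSet.univ_pi fun _ => measurableSet_Ioi
  set K : (Fin k → ℝ) × (Fin k → ℝ) → ℝ≥0∞ := fun p =>
    ENNReal.ofReal (∏ j, p.1 j ^ (s j - 1)) *
      (ENNReal.ofReal (∏ j, p.1 j ^ (-ζ j - α j) / Real.Gamma (α j)) *
        (ENNReal.ofReal (∏ j, (p.1 j - p.2 j) ^ (α j - 1) * p.2 j ^ ζ j) * f p.2)) with hKdef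
  set T : Set ((Fin k → ℝ) × (Fin k → ℝ)) :=
    {p : (Fin k → ℝ) × (Fin k → ℝ) | ∀ j, 0 < p.2 j ∧ p.2 j < p.1 j} with hTdef
  have hT : MeasurableSet T := by
    have : T = ⋂ j, ({p : (Fin k → ℝ) × (Fin k → ℝ) | 0 < p.2 j}
        ∩ {p : (Fin k → ℝ) × (Fin k → ℝ) | p.2 j < p.1 j}) := by
      ext p; simp [hTdef, forall_and]
    rw [this]
    refine MeasurableSet.iInter fun j => MeasurableSet.inter ?_ ?_
    · exact measurableSet_lt measurable_const (measurable_snd.eval)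
    · exact measurableSet_lt (measurable_snd.eval) (measurable_fst.eval)
  have hKmeas : Measurable K := by
    rw [hKdef]
    apply Measurable.mul
    · apply Measurable.ennreal_ofReal
      refine Finset.measurable_prod _ fun j _ => ?_
      fun_prop
    apply Measurable.mul
    · apply Measurable.ennreal_ofReal
      refine Finset.measurable_prod _ fun j _ => ?_
      fun_prop
    apply Measurable.mul
    · apply Measurable.ennreal_ofReal
      refine Finset.measurable_prod _ fun j _ => ?_
      fun_prop
    · exact hf_meas.comp measurable_snd
  have step1 : ∀ u : Fin k → ℝ, ENNReal.ofReal (∏ j, u j ^ (s j - 1)) * kober1E ζ α f u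
      = ∫⁻ v : Fin k → ℝ, T.indicator K (u, v) := by
    intro u
    have hQ : MeasurableSet {v : Fin k → ℝ | ∀ j, 0 < v j ∧ v j < u j} := by
      have : {v : Fin k → ℝ | ∀ j, 0 < v j ∧ v j < u j}
          = Set.pi univ (fun j => Ioo 0 (u j)) := by
        ext v; simp [Set.mem_pi]
      rw [this]; exact MeasurableSet.univ_pi fun _ => measurableSet_Ioo
    rw [kober1E, ← lintegral_const_mul' _ _ ENNReal.ofReal_ne_top,
      ← lintegral_const_mul' _ _ ENNReal.ofReal_ne_top, ← lintegral_indicator hQ]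
    refine lintegral_congr fun v => ?_
    by_cases hv : v ∈ {v : Fin k → ℝ | ∀ j, 0 < v j ∧ v j < u j}
    · rw [Set.indicator_of_mem hv, Set.indicator_of_mem (show (u, v) ∈ T from hv)]
    · rw [Set.indicator_of_notMem hv, Set.indicator_of_notMem (show (u, v) ∉ T from hv)]
  calc ∫⁻ u in P, ENNReal.ofReal (∏ j, u j ^ (s j - 1)) * kober1E ζ α f u
      = ∫⁻ u in P, ∫⁻ v : Fin k → ℝ, T.indicator K (u, v) := by
        exact setLIntegral_congr_fun hP fun u _ => step1 u
    _ = ∫⁻ u : Fin k → ℝ, ∫⁻ v : Fin k → ℝ, T.indicator K (u, v) := by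
        rw [← lintegral_indicator hP]
        refine lintegral_congr fun u => ?_
        by_cases hu : u ∈ P
        · rw [Set.indicator_of_mem hu]
        · rw [Set.indicator_of_notMem hu]
          have hz : ∀ v : Fin k → ℝ, T.indicator K (u, v) = 0 := fun v =>
            Set.indicator_of_notMem
              (fun hmem => hu (fun j => lt_trans (hmem j).1 (hmem j).2)) _
          simp only [hz, lintegral_zero]
    _ = ∫⁻ v : Fin k → ℝ, ∫⁻ u : Fin k → ℝ, T.indicator K (u, v) := by
        exact lintegral_lintegral_swap (hKmeas.indicator hT).aemeasurable
    _ = ∫⁻ v : Fin k → ℝ, P.indicator (fun v =>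
          ENNReal.ofReal (∏ j, Real.Gamma (1 + ζ j - s j) / Real.Gamma (1 + α j + ζ j - s j))
            * (ENNReal.ofReal (∏ j, v j ^ (s j - 1)) * f v)) v := by
        refine lintegral_congr fun v => ?_
        by_cases hv : v ∈ P
        · rw [Set.indicator_of_mem hv]
          have hvj : ∀ j, 0 < v j := hv
          have hR : MeasurableSet (Set.pi univ (fun j => Ioi (v j))) :=
            MeasurableSet.univ_pi fun _ => measurableSet_Ioi
          have hindR : ∀ u : Fin k → ℝ, T.indicator K (u, v)
              = (Set.pi univ (fun j => Ioi (v j))).indicator (fun u => K (u, v)) u := by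
            intro u
            by_cases hu : u ∈ Set.pi univ (fun j => Ioi (v j))
            · rw [Set.indicator_of_mem hu,
                Set.indicator_of_mem (show (u, v) ∈ T from fun j => ⟨hvj j, hu j trivial⟩)]
            · rw [Set.indicator_of_notMem hu, Set.indicator_of_notMem]
              intro hmem
              exact hu (fun j _ => (hmem j).2)
          simp only [hindR]
          rw [lintegral_indicator hR]
          set φ : Fin k → ℝ → ℝ≥0∞ := fun j x =>
            ENNReal.ofReal (x ^ (s j - 1))
              * ENNReal.ofReal (x ^ (-ζ j - α j) / Real.Gamma (α j))
              * ENNReal.ofReal ((x - v j) ^ (α j - 1) * v j ^ ζ j) with hφdef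
          have hφmeas : ∀ j, Measurable (φ j) := by
            intro j
            rw [hφdef]
            fun_prop
          have hcong : ∀ u ∈ Set.pi univ (fun j => Ioi (v j)),
              K (u, v) = (∏ j, φ j (u j)) * f v := by
            intro u hu
            have huj : ∀ j, 0 < u j := fun j => (hvj j).trans (hu j trivial)
            rw [hKdef]
            simp only
            rw [ENNReal.ofReal_prod_of_nonneg
                (fun j _ => Real.rpow_nonneg (huj j).le _),
              ENNReal.ofReal_prod_of_nonneg
                (fun j _ => div_nonneg (Real.rpow_nonneg (huj j).le _)
                  (Real.Gamma_pos_of_pos (hα j)).le),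
              ENNReal.ofReal_prod_of_nonneg
                (fun j _ => mul_nonneg
                  (Real.rpow_nonneg (by
                    have := Set.mem_Ioi.mp (hu j trivial); linarith) _)
                  (Real.rpow_nonneg (hvj j).le _)),
              hφdef]
            simp only
            rw [Finset.prod_mul_distrib, Finset.prod_mul_distrib]
            ring
          have hprodmeas : Measurable fun x : Fin k → ℝ => ∏ j, φ j (x j) :=
            Finset.measurable_prod _ fun j _ => (hφmeas j).comp (measurable_pi_apply j)
          rw [setLIntegral_congr_fun hR hcong,
            lintegral_mul_const _ hprodmeas,
            lintegral_pi_prod φ hφmeas _ (fun j => measurableSet_Ioi),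
            Finset.prod_congr rfl (fun j _ => key2 (hα j) (hs j) (hvj j)),
            ← ENNReal.ofReal_prod_of_nonneg (fun j _ => mul_nonneg
              (Real.rpow_nonneg (hvj j).le _)
              (div_nonneg (Real.Gamma_pos_of_pos (by linarith [hs j])).le
                (Real.Gamma_pos_of_pos (by linarith [hs j, hα j])).le)),
            Finset.prod_mul_distrib,
            ENNReal.ofReal_mul (Finset.prod_nonneg fun j _ =>
              Real.rpow_nonneg (hvj j).le _)]
          ring
        · rw [Set.indicator_of_notMem hv]
          have hz : ∀ u : Fin k → ℝ, T.indicator K (u, v) = 0 := fun u =>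
            Set.indicator_of_notMem (fun hmem => hv (fun j => (hmem j).1)) _
          simp only [hz, lintegral_zero]
    _ = ENNReal.ofReal
          (∏ j, Real.Gamma (1 + ζ j - s j) / Real.Gamma (1 + α j + ζ j - s j)) *
          ∫⁻ v in P, ENNReal.ofReal (∏ j, v j ^ (s j - 1)) * f v := by
        rw [lintegral_indicator hP, lintegral_const_mul' _ _ ENNReal.ofReal_ne_top]
end

section
/- Let k ≥ 1 and let a_j > 0, q_j < 1, η_j > 0, ζ_j > 0 be real numbers for j = 1,…,k. Let φ be the product of independent pathway densities with exponent parameter ζ_j − 1, i.e. φ(x) = ∏_{j=1}^k c_j x_j^{ζ_j−1}[1 − a_j(1−q_j)x_j]^{η_j/(1−q_j)} for 0 < x_j < 1/(a_j(1−q_j)) (0 elsewhere), where c_j = [a_j(1−q_j)]^{ζ_j} Γ(ζ_j + η_j/(1−q_j) + 1)/(Γ(ζ_j) Γ(η_j/(1−q_j) + 1)). Let f : ℝ^k → [0,∞) be a measurable probability density vanishing outside (0,∞)^k. Then the pushforward of (volume.withDensity φ) ⊗ (volume.withDensity f) under the map (x, v) ↦ (v_1/x_1,…,v_k/x_k) equals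 volume.withDensity g, where for u ∈ (0,∞)^k, g(u) = (∏_{j=1}^k c_j u_j^{−ζ_j − η_j/(1−q_j) − 1}) · ∫_0^{u_1/(a_1(1−q_1))} ⋯ ∫_0^{u_k/(a_k(1−q_k))} (∏_{j=1}^k [u_j − a_j(1−q_j)v_j]^{η_j/(1−q_j)} v_j^{ζ_j}) f(v_1,…,v_k) dv_1⋯dv_k. -/
open MeasureTheory Real Set
open scoped ENNReal

/-- Normalizing constant of the pathway density with parameters `a, q, η` and exponent
parameter `ζ − 1`: `c = [a(1−q)]^{ζ} Γ(ζ + η/(1−q) + 1)/(Γ(ζ) Γ(η/(1−q) + 1))`. -/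
noncomputable def pathwayC' (a q η ζ : ℝ) : ℝ :=
  (a * (1 - q)) ^ ζ * Real.Gamma (ζ + η / (1 - q) + 1) /
    (Real.Gamma ζ * Real.Gamma (η / (1 - q) + 1))

private lemma pathway_orth_meas {k : ℕ} : MeasurableSet {x : Fin k → ℝ | ∀ j, 0 < x j} := by
  have : {x : Fin k → ℝ | ∀ j, 0 < x j} = ⋂ j, {x | 0 < x j} := by ext x; simp [Set.mem_iInter]
  rw [this]
  exact MeasurableSet.iInter fun j => measurableSet_lt measurable_const (measurable_pi_apply j)

private lemma pathway_band_meas {k : ℕ} (w : Fin k → ℝ) :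
    MeasurableSet {x : Fin k → ℝ | ∀ j, 0 < x j ∧ x j < w j} := by
  have : {x : Fin k → ℝ | ∀ j, 0 < x j ∧ x j < w j}
      = ⋂ j, ({x | 0 < x j} ∩ {x | x j < w j}) := by
    ext x; simp [Set.mem_iInter, forall_and]
  rw [this]
  exact MeasurableSet.iInter fun j =>
    ((measurableSet_lt measurable_const (measurable_pi_apply j)).inter
      (measurableSet_lt (measurable_pi_apply j) measurable_const))

private lemma pathway_cov {k : ℕ} (v : Fin k → ℝ) (hv : ∀ j, 0 < v j) (g : (Fin k → ℝ) → ℝ≥0∞) :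
    ∫⁻ x in {x : Fin k → ℝ | ∀ j, 0 < x j}, g x
      = ∫⁻ u in {x : Fin k → ℝ | ∀ j, 0 < x j},
          ENNReal.ofReal (∏ j, v j / (u j)^2) * g (fun j => v j / u j) := by
  set O := {x : Fin k → ℝ | ∀ j, 0 < x j} with hO
  have hmeas : MeasurableSet O := pathway_orth_meas
  set F : (Fin k → ℝ) → (Fin k → ℝ) := fun x => fun j => v j / x j with hF
  have himg : F '' O = O := by
    apply Set.Subset.antisymm
    · rintro _ ⟨x, hx, rfl⟩ j
      exact div_pos (hv j) (hx j)
    · intro u hu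
      refine ⟨F u, fun j => div_pos (hv j) (hu j), ?_⟩
      funext j
      simp only [hF]
      exact div_div_cancel₀ (hv j).ne'
  have hder : ∀ x ∈ O, HasFDerivWithinAt F
      (ContinuousLinearMap.pi fun j => (-(v j) / (x j)^2) • (ContinuousLinearMap.proj j :
        (Fin k → ℝ) →L[ℝ] ℝ)) O x := by
    intro x hx
    apply HasFDerivAt.hasFDerivWithinAt
    apply hasFDerivAt_pi.2
    intro j
    have h1 : HasDerivAt (fun t : ℝ => v j / t) (-(v j) / (x j)^2) (x j) := by
      simpa [div_eq_mul_inv, neg_div, mul_div_assoc] using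
        ((hasDerivAt_inv (hx j).ne').const_mul (v j))
    exact h1.comp_hasFDerivAt x (hasFDerivAt_apply j x)
  have hinj : Set.InjOn F O := by
    intro x hx y hy hxy
    funext j
    have h1 : v j / x j = v j / y j := congrFun hxy j
    have hx' := (hx j).ne'
    have hy' := (hy j).ne'
    field_simp at h1
    have := mul_left_cancel₀ (hv j).ne' h1
    linarith
  have hdet : ∀ x ∈ O, |(ContinuousLinearMap.pi fun j => (-(v j) / (x j)^2) •
      (ContinuousLinearMap.proj j : (Fin k → ℝ) →L[ℝ] ℝ)).det| = ∏ j, v j / (x j)^2 := by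
    intro x hx
    have hd : (ContinuousLinearMap.pi fun j => (-(v j) / (x j)^2) • (ContinuousLinearMap.proj j :
        (Fin k → ℝ) →L[ℝ] ℝ)).det = ∏ j, (-(v j) / (x j)^2) := by
      rw [ContinuousLinearMap.det]
      have : (LinearMap.toMatrix (Pi.basisFun ℝ (Fin k)) (Pi.basisFun ℝ (Fin k))
          (ContinuousLinearMap.pi fun j => (-(v j) / (x j)^2) • (ContinuousLinearMap.proj j :
            (Fin k → ℝ) →L[ℝ] ℝ)).toLinearMap) = Matrix.diagonal (fun j => -(v j) / (x j)^2) := by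
        ext i j
        simp [LinearMap.toMatrix_apply, Matrix.diagonal, Pi.single_apply]
      rw [← LinearMap.det_toMatrix (Pi.basisFun ℝ (Fin k)), this, Matrix.det_diagonal]
    rw [hd, Finset.abs_prod]
    congr 1
    funext j
    rw [abs_div, abs_neg, abs_of_pos (hv j),
      abs_of_pos (by have := (hx j); positivity : (0:ℝ) < (x j)^2)]
  calc ∫⁻ x in O, g x = ∫⁻ x in F '' O, g x := by rw [himg]
    _ = ∫⁻ x in O, ENNReal.ofReal |(ContinuousLinearMap.pi fun j => (-(v j) / (x j)^2) •
          (ContinuousLinearMap.proj j : (Fin k → ℝ) →L[ℝ] ℝ)).det| * g (F x) := by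
        exact lintegral_image_eq_lintegral_abs_det_fderiv_mul volume hmeas hder hinj g
    _ = ∫⁻ u in O, ENNReal.ofReal (∏ j, v j / (u j)^2) * g (fun j => v j / u j) := by
        apply setLIntegral_congr_fun hmeas
        intro x hx
        beta_reduce
        rw [hdet x hx]

private lemma pathway_perj {b pp c ζ u v : ℝ} (hb : 0 < b) (hu : 0 < u) (hv : 0 < v)
    (hlt : v < u / b) :
    v / u ^ 2 * (c * ((v / u) ^ (ζ - 1) * (1 - b * (v / u)) ^ pp))
      = c * u ^ (-ζ - pp - 1) * ((u - b * v) ^ pp * v ^ ζ) := by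
  have hw : 0 < u - b * v := by
    have := (lt_div_iff₀ hb).1 hlt
    nlinarith [mul_comm b v]
  have h1 : 1 - b * (v / u) = (u - b * v) / u := by field_simp
  rw [h1, Real.div_rpow hw.le hu.le, Real.div_rpow hv.le hu.le,
    show -ζ - pp - 1 = -(ζ - 1) + -pp + -2 by ring,
    Real.rpow_add hu, Real.rpow_add hu, Real.rpow_neg hu.le, Real.rpow_neg hu.le,
    Real.rpow_neg hu.le, Real.rpow_sub hv, Real.rpow_one,
    show ((2:ℝ)) = ((2:ℕ):ℝ) by norm_num, Real.rpow_natCast]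
  have e1 : u ^ (ζ - 1) ≠ 0 := (Real.rpow_pos_of_pos hu _).ne'
  have e2 : u ^ pp ≠ 0 := (Real.rpow_pos_of_pos hu _).ne'
  have e3 : (u:ℝ) ^ (2:ℕ) ≠ 0 := by positivity
  have e4 : v ≠ 0 := hv.ne'
  field_simp

private lemma pathway_sub_pos {b u v : ℝ} (hb : 0 < b) (h : v < u / b) : 0 < u - b * v := by
  rw [lt_div_iff₀ hb] at h; nlinarith [mul_comm b v]

private lemma pathway_mem_iff {b u v : ℝ} (hb : 0 < b) (hu : 0 < u) :
    v / u < 1 / b ↔ v < u / b := by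
  rw [div_lt_div_iff₀ hu hb, one_mul, lt_div_iff₀ hb, mul_comm]

private lemma pathway_one_sub_nonneg {b u v : ℝ} (hb : 0 < b) (hu : 0 < u) (h : v < u / b) :
    0 ≤ 1 - b * (v / u) := by
  have h2 : 0 < u - b * v := pathway_sub_pos hb h
  have h3 : 1 - b * (v / u) = (u - b * v) / u := by field_simp
  rw [h3]; positivity

private lemma pathway_meas1 {k : ℕ} (b p c ζ : Fin k → ℝ) :
    Measurable fun x : Fin k → ℝ => ∏ j, c j * (x j ^ (ζ j - 1) * (1 - b j * x j) ^ (p j)) := by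
  measurability

private lemma pathway_meas2 {k : ℕ} (b p ζ u : Fin k → ℝ) {f : (Fin k → ℝ) → ℝ}
    (hf : Measurable f) :
    Measurable fun v : Fin k → ℝ => (∏ j, (u j - b j * v j) ^ (p j) * v j ^ ζ j) * f v := by
  measurability

private theorem pathway_kober1_aux {k : ℕ} (b p c ζ : Fin k → ℝ)
    (hb : ∀ j, 0 < b j) (hp : ∀ j, 0 < p j) (hζ : ∀ j, 0 < ζ j) (hc : ∀ j, 0 ≤ c j)
    (f : (Fin k → ℝ) → ℝ) (hf_meas : Measurable f) (hf_nonneg : ∀ x, 0 ≤ f x)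
    (hf_supp : ∀ x, ¬ (∀ j, 0 < x j) → f x = 0)
    (hf_int : ∫⁻ x, ENNReal.ofReal (f x) = 1) :
    Measure.map (fun pr : (Fin k → ℝ) × (Fin k → ℝ) => fun j => pr.2 j / pr.1 j)
      ((volume.withDensity (fun x => ENNReal.ofReal
          (Set.indicator {x : Fin k → ℝ | ∀ j, 0 < x j ∧ x j < 1 / b j}
            (fun x => ∏ j, c j * (x j ^ (ζ j - 1) * (1 - b j * x j) ^ (p j))) x))).prod
        (volume.withDensity fun v => ENNReal.ofReal (f v)))
    = volume.withDensity fun u => ENNReal.ofReal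
        (Set.indicator {u : Fin k → ℝ | ∀ j, 0 < u j}
          (fun u => (∏ j, c j * u j ^ (-ζ j - p j - 1)) *
            ∫ v in {v : Fin k → ℝ | ∀ j, 0 < v j ∧ v j < u j / b j},
              (∏ j, (u j - b j * v j) ^ (p j) * v j ^ ζ j) * f v) u) := by
  classical
  set O : Set (Fin k → ℝ) := {x : Fin k → ℝ | ∀ j, 0 < x j} with hO_def
  have hOmeas : MeasurableSet O := pathway_orth_meas
  set D : Set (Fin k → ℝ) := {x : Fin k → ℝ | ∀ j, 0 < x j ∧ x j < 1 / b j} with hD_def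
  have hDmeas : MeasurableSet D := pathway_band_meas _
  set φ : (Fin k → ℝ) → ℝ := Set.indicator D
      (fun x => ∏ j, c j * (x j ^ (ζ j - 1) * (1 - b j * x j) ^ (p j))) with hφ_def
  set Φ : (Fin k → ℝ) → ℝ≥0∞ := fun x => ENNReal.ofReal (φ x) with hΦ_def
  set F : (Fin k → ℝ) → ℝ≥0∞ := fun v => ENNReal.ofReal (f v) with hF_def
  set g : (Fin k → ℝ) → ℝ := fun u => (∏ j, c j * u j ^ (-ζ j - p j - 1)) *
      ∫ v in {v : Fin k → ℝ | ∀ j, 0 < v j ∧ v j < u j / b j},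
        (∏ j, (u j - b j * v j) ^ (p j) * v j ^ ζ j) * f v with hg_def
  have hφmeas : Measurable φ := (pathway_meas1 b p c ζ).indicator hDmeas
  have hΦmeas : Measurable Φ := hφmeas.ennreal_ofReal
  have hFmeas : Measurable F := hf_meas.ennreal_ofReal
  have hT : Measurable (fun pr : (Fin k → ℝ) × (Fin k → ℝ) => fun j => pr.2 j / pr.1 j) :=
    measurable_pi_lambda _ fun j =>
      ((measurable_pi_apply j).comp measurable_snd).div
        ((measurable_pi_apply j).comp measurable_fst)
  have hΦzero : ∀ x, x ∉ O → Φ x = 0 := by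
    intro x hx
    have hxD : x ∉ D := fun hxD => hx (fun j => (hxD j).1)
    simp [hΦ_def, hφ_def, Set.indicator_of_notMem hxD]
  have hFzero : ∀ v, v ∉ O → F v = 0 := by
    intro v hv; simp [hF_def, hf_supp v hv]
  have hSmeas : ∀ u : Fin k → ℝ,
      MeasurableSet {v : Fin k → ℝ | ∀ j, 0 < v j ∧ v j < u j / b j} :=
    fun u => pathway_band_meas _
  -- pointwise identity
  have hpt : ∀ u, u ∈ O → ∀ v : Fin k → ℝ,
      ENNReal.ofReal (∏ j, v j / (u j)^2) * Φ (fun j => v j / u j) * F v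
        = ENNReal.ofReal (∏ j, c j * u j ^ (-ζ j - p j - 1)) *
          Set.indicator {v : Fin k → ℝ | ∀ j, 0 < v j ∧ v j < u j / b j}
            (fun v => ENNReal.ofReal
              ((∏ j, (u j - b j * v j) ^ (p j) * v j ^ ζ j) * f v)) v := by
    intro u hu v
    have hu' : ∀ j, 0 < u j := hu
    by_cases hvS : v ∈ {v : Fin k → ℝ | ∀ j, 0 < v j ∧ v j < u j / b j}
    · have hvO : ∀ j, 0 < v j := fun j => (hvS j).1
      have hmem : (fun j => v j / u j) ∈ D := by
        intro j
        exact ⟨div_pos (hvO j) (hu' j), (pathway_mem_iff (hb j) (hu' j)).2 (hvS j).2⟩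
      have hA : 0 ≤ ∏ j, v j / u j ^ 2 :=
        Finset.prod_nonneg fun j _ => div_nonneg (hvO j).le (sq_nonneg _)
      have hB : 0 ≤ ∏ j, c j * ((v j / u j) ^ (ζ j - 1) * (1 - b j * (v j / u j)) ^ p j) :=
        Finset.prod_nonneg fun j _ => mul_nonneg (hc j) (mul_nonneg
          (Real.rpow_nonneg (div_nonneg (hvO j).le (hu' j).le) _)
          (Real.rpow_nonneg (pathway_one_sub_nonneg (hb j) (hu' j) (hvS j).2) _))
      have hC : 0 ≤ ∏ j, c j * u j ^ (-ζ j - p j - 1) :=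
        Finset.prod_nonneg fun j _ => mul_nonneg (hc j) (Real.rpow_nonneg (hu' j).le _)
      rw [Set.indicator_of_mem hvS, hΦ_def]
      simp only [hφ_def]
      rw [Set.indicator_of_mem hmem, hF_def]
      rw [← ENNReal.ofReal_mul hA, ← ENNReal.ofReal_mul (mul_nonneg hA hB),
        ← ENNReal.ofReal_mul hC]
      congr 1
      have hprod : (∏ j, v j / u j ^ 2) *
          (∏ j, c j * ((v j / u j) ^ (ζ j - 1) * (1 - b j * (v j / u j)) ^ p j))
          = (∏ j, c j * u j ^ (-ζ j - p j - 1)) *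
            (∏ j, (u j - b j * v j) ^ p j * v j ^ ζ j) := by
        rw [← Finset.prod_mul_distrib, ← Finset.prod_mul_distrib]
        exact Finset.prod_congr rfl fun j _ =>
          pathway_perj (hb j) (hu' j) (hvO j) (hvS j).2
      calc (∏ j, v j / u j ^ 2) *
            (∏ j, c j * ((v j / u j) ^ (ζ j - 1) * (1 - b j * (v j / u j)) ^ p j)) * f v
          = (∏ j, c j * u j ^ (-ζ j - p j - 1)) *
            (∏ j, (u j - b j * v j) ^ p j * v j ^ ζ j) * f v := by rw [hprod]
        _ = (∏ j, c j * u j ^ (-ζ j - p j - 1)) *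
            ((∏ j, (u j - b j * v j) ^ p j * v j ^ ζ j) * f v) := by ring
    · rw [Set.indicator_of_notMem hvS, mul_zero]
      by_cases hvO : ∀ j, 0 < v j
      · have hnm : (fun j => v j / u j) ∉ D := by
          intro hmem
          apply hvS
          intro j
          have h2 : v j / u j < 1 / b j := (hmem j).2
          exact ⟨hvO j, (pathway_mem_iff (hb j) (hu' j)).1 h2⟩
        simp [hΦ_def, hφ_def, Set.indicator_of_notMem hnm]
      · simp [hFzero v hvO]
  -- Step B
  have hkey : ∀ u, u ∈ O →
      (∫⁻ v, ENNReal.ofReal (∏ j, v j / (u j)^2) * Φ (fun j => v j / u j) * F v)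
        = ENNReal.ofReal (g u) := by
    intro u hu
    have hu' : ∀ j, 0 < u j := hu
    have hnnS : ∀ v ∈ {v : Fin k → ℝ | ∀ j, 0 < v j ∧ v j < u j / b j},
        0 ≤ (∏ j, (u j - b j * v j) ^ (p j) * v j ^ ζ j) * f v := by
      intro v hv
      apply mul_nonneg _ (hf_nonneg v)
      exact Finset.prod_nonneg fun j _ => mul_nonneg
        (Real.rpow_nonneg (pathway_sub_pos (hb j) (hv j).2).le _)
        (Real.rpow_nonneg (hv j).1.le _)
    have hM : 0 ≤ ∏ j, (u j ^ p j * (u j / b j) ^ ζ j) :=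
      Finset.prod_nonneg fun j _ => mul_nonneg (Real.rpow_nonneg (hu' j).le _)
        (Real.rpow_nonneg (div_nonneg (hu' j).le (hb j).le) _)
    have hfin : (∫⁻ v in {v : Fin k → ℝ | ∀ j, 0 < v j ∧ v j < u j / b j},
        ENNReal.ofReal ((∏ j, (u j - b j * v j) ^ (p j) * v j ^ ζ j) * f v)) ≠ ⊤ := by
      have hle : (∫⁻ v in {v : Fin k → ℝ | ∀ j, 0 < v j ∧ v j < u j / b j},
          ENNReal.ofReal ((∏ j, (u j - b j * v j) ^ (p j) * v j ^ ζ j) * f v))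
          ≤ ENNReal.ofReal (∏ j, (u j ^ p j * (u j / b j) ^ ζ j)) := by
        calc (∫⁻ v in {v : Fin k → ℝ | ∀ j, 0 < v j ∧ v j < u j / b j},
              ENNReal.ofReal ((∏ j, (u j - b j * v j) ^ (p j) * v j ^ ζ j) * f v))
            ≤ ∫⁻ v in {v : Fin k → ℝ | ∀ j, 0 < v j ∧ v j < u j / b j},
              ENNReal.ofReal (∏ j, (u j ^ p j * (u j / b j) ^ ζ j)) * F v := by
              apply setLIntegral_mono (measurable_const.mul hFmeas)
              intro v hv
              simp only [hF_def, Pi.mul_apply]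
              rw [← ENNReal.ofReal_mul hM]
              apply ENNReal.ofReal_le_ofReal
              apply mul_le_mul_of_nonneg_right _ (hf_nonneg v)
              apply Finset.prod_le_prod
              · intro j _
                exact mul_nonneg
                  (Real.rpow_nonneg (pathway_sub_pos (hb j) (hv j).2).le _)
                  (Real.rpow_nonneg (hv j).1.le _)
              · intro j _
                have hwpos : 0 < u j - b j * v j := pathway_sub_pos (hb j) (hv j).2
                apply mul_le_mul
                · exact Real.rpow_le_rpow hwpos.le
                    (by nlinarith [mul_pos (hb j) (hv j).1]) (hp j).le
                · exact Real.rpow_le_rpow (hv j).1.le (hv j).2.le (hζ j).le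
                · exact Real.rpow_nonneg (hv j).1.le _
                · exact Real.rpow_nonneg (hu' j).le _
          _ ≤ ∫⁻ v, ENNReal.ofReal (∏ j, (u j ^ p j * (u j / b j) ^ ζ j)) * F v :=
              setLIntegral_le_lintegral _ _
          _ = ENNReal.ofReal (∏ j, (u j ^ p j * (u j / b j) ^ ζ j)) := by
              rw [lintegral_const_mul' _ _ ENNReal.ofReal_ne_top, hF_def, hf_int, mul_one]
      exact ne_top_of_le_ne_top ENNReal.ofReal_ne_top hle
    have hnn : 0 ≤ᵐ[volume.restrict {v : Fin k → ℝ | ∀ j, 0 < v j ∧ v j < u j / b j}]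
        fun v => (∏ j, (u j - b j * v j) ^ (p j) * v j ^ ζ j) * f v :=
      (ae_restrict_iff' (hSmeas u)).2 (ae_of_all _ hnnS)
    have hintg : IntegrableOn
        (fun v => (∏ j, (u j - b j * v j) ^ (p j) * v j ^ ζ j) * f v)
        {v : Fin k → ℝ | ∀ j, 0 < v j ∧ v j < u j / b j} volume := by
      refine ⟨(pathway_meas2 b p ζ u hf_meas).aestronglyMeasurable, ?_⟩
      rw [hasFiniteIntegral_iff_ofReal hnn]
      exact lt_top_iff_ne_top.2 hfin
    have hCnn : 0 ≤ ∏ j, c j * u j ^ (-ζ j - p j - 1) :=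
      Finset.prod_nonneg fun j _ => mul_nonneg (hc j) (Real.rpow_nonneg (hu' j).le _)
    rw [lintegral_congr (hpt u hu),
      lintegral_const_mul' _ _ ENNReal.ofReal_ne_top, lintegral_indicator (hSmeas u),
      hg_def]
    rw [ENNReal.ofReal_mul hCnn, ofReal_integral_eq_lintegral_ofReal hintg hnn]
  -- Step A
  ext s hs
  rw [Measure.map_apply hT hs, withDensity_apply _ hs]
  have hA : MeasurableSet ((fun pr : (Fin k → ℝ) × (Fin k → ℝ) =>
      fun j => pr.2 j / pr.1 j) ⁻¹' s) := hT hs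
  have hΦtop : ∀ x, Φ x ≠ ⊤ := fun x => ENNReal.ofReal_ne_top
  have hind : ∀ (x v : Fin k → ℝ),
      Set.indicator ((fun pr : (Fin k → ℝ) × (Fin k → ℝ) =>
        fun j => pr.2 j / pr.1 j) ⁻¹' s) (1 : ((Fin k → ℝ) × (Fin k → ℝ)) → ℝ≥0∞) (x, v)
      = Set.indicator s (1 : (Fin k → ℝ) → ℝ≥0∞) (fun j => v j / x j) := by
    intro x v
    simp only [Set.indicator_apply, Set.mem_preimage, Pi.one_apply]
  have step1 : ((volume.withDensity Φ).prod (volume.withDensity F))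
      ((fun pr : (Fin k → ℝ) × (Fin k → ℝ) => fun j => pr.2 j / pr.1 j) ⁻¹' s)
      = ∫⁻ x, Φ x * ∫⁻ v, F v *
          Set.indicator ((fun pr : (Fin k → ℝ) × (Fin k → ℝ) =>
            fun j => pr.2 j / pr.1 j) ⁻¹' s) 1 (x, v) := by
    rw [← lintegral_indicator_one hA,
      lintegral_prod _ ((measurable_one.indicator hA).aemeasurable),
      lintegral_withDensity_eq_lintegral_mul_non_measurable volume hΦmeas
        (ae_of_all _ fun x => ENNReal.ofReal_lt_top)]
    apply lintegral_congr
    intro x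
    simp only [Pi.mul_apply]
    congr 1
    rw [lintegral_withDensity_eq_lintegral_mul_non_measurable volume hFmeas
      (ae_of_all _ fun v => ENNReal.ofReal_lt_top)]
    rfl
  have step2 : (∫⁻ x, Φ x * ∫⁻ v, F v *
        Set.indicator ((fun pr : (Fin k → ℝ) × (Fin k → ℝ) =>
          fun j => pr.2 j / pr.1 j) ⁻¹' s) 1 (x, v))
      = ∫⁻ x in O, ∫⁻ v, Φ x * (F v * Set.indicator s 1 (fun j => v j / x j)) := by
    rw [← lintegral_indicator hOmeas]
    apply lintegral_congr
    intro x
    by_cases hx : x ∈ O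
    · rw [Set.indicator_of_mem hx]
      calc Φ x * ∫⁻ v, F v * Set.indicator ((fun pr : (Fin k → ℝ) × (Fin k → ℝ) =>
              fun j => pr.2 j / pr.1 j) ⁻¹' s) 1 (x, v)
          = Φ x * ∫⁻ v, F v * Set.indicator s 1 (fun j => v j / x j) := by
            congr 1
        _ = ∫⁻ v, Φ x * (F v * Set.indicator s 1 (fun j => v j / x j)) :=
            (lintegral_const_mul' _ _ (hΦtop x)).symm
    · rw [Set.indicator_of_notMem hx, hΦzero x hx, zero_mul]
  have meas1 : Measurable (fun xv : (Fin k → ℝ) × (Fin k → ℝ) =>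
      Φ xv.1 * (F xv.2 * Set.indicator s 1 (fun j => xv.2 j / xv.1 j))) :=
    (hΦmeas.comp measurable_fst).mul ((hFmeas.comp measurable_snd).mul
      ((measurable_one.indicator hs).comp hT))
  have step3 : (∫⁻ x in O, ∫⁻ v, Φ x * (F v * Set.indicator s 1 (fun j => v j / x j)))
      = ∫⁻ v, ∫⁻ x in O, Φ x * (F v * Set.indicator s 1 (fun j => v j / x j)) :=
    lintegral_lintegral_swap meas1.aemeasurable
  have step4 : (∫⁻ v, ∫⁻ x in O, Φ x * (F v * Set.indicator s 1 (fun j => v j / x j)))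
      = ∫⁻ v, ∫⁻ u in O, (ENNReal.ofReal (∏ j, v j / (u j)^2) *
          Φ (fun j => v j / u j) * F v) * Set.indicator s 1 u := by
    apply lintegral_congr
    intro v
    by_cases hv : v ∈ O
    · rw [pathway_cov v hv (fun x => Φ x * (F v * Set.indicator s 1 (fun j => v j / x j)))]
      apply setLIntegral_congr_fun hOmeas
      intro u hu
      have harg : ∀ j, v j / (v j / u j) = u j := by
        intro j
        rw [div_div_eq_mul_div, mul_comm, mul_div_assoc, div_self (hv j).ne', mul_one]
      simp only [harg]
      ring
    · simp [hFzero v hv]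
  have meas2 : Measurable (fun vu : (Fin k → ℝ) × (Fin k → ℝ) =>
      (ENNReal.ofReal (∏ j, vu.1 j / (vu.2 j)^2) * Φ (fun j => vu.1 j / vu.2 j) * F vu.1) *
        Set.indicator s 1 vu.2) := by
    refine Measurable.fun_mul (Measurable.fun_mul (Measurable.fun_mul ?_ ?_) ?_) ?_
    · apply Measurable.ennreal_ofReal
      apply Finset.measurable_prod
      intro j _
      exact ((measurable_pi_apply j).comp measurable_fst).div
        (((measurable_pi_apply j).comp measurable_snd).pow_const 2)
    · exact hΦmeas.comp (measurable_pi_lambda _ fun j =>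
        ((measurable_pi_apply j).comp measurable_fst).div
          ((measurable_pi_apply j).comp measurable_snd))
    · exact hFmeas.comp measurable_fst
    · exact (measurable_one.indicator hs).comp measurable_snd
  have step5 : (∫⁻ v, ∫⁻ u in O, (ENNReal.ofReal (∏ j, v j / (u j)^2) *
          Φ (fun j => v j / u j) * F v) * Set.indicator s 1 u)
      = ∫⁻ u in O, ∫⁻ v, (ENNReal.ofReal (∏ j, v j / (u j)^2) *
          Φ (fun j => v j / u j) * F v) * Set.indicator s 1 u :=
    lintegral_lintegral_swap meas2.aemeasurable
  have step6 : (∫⁻ u in O, ∫⁻ v, (ENNReal.ofReal (∏ j, v j / (u j)^2) *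
          Φ (fun j => v j / u j) * F v) * Set.indicator s 1 u)
      = ∫⁻ u in O, Set.indicator s (fun u => ENNReal.ofReal (g u)) u := by
    apply setLIntegral_congr_fun hOmeas
    intro u hu
    by_cases hus : u ∈ s
    · simp only [Set.indicator_of_mem hus, Pi.one_apply, mul_one]
      exact hkey u hu
    · simp [Set.indicator_of_notMem hus]
  have step7 : (∫⁻ u in O, Set.indicator s (fun u => ENNReal.ofReal (g u)) u)
      = ∫⁻ u in s, ENNReal.ofReal (Set.indicator O g u) := by
    rw [← lintegral_indicator hOmeas, ← lintegral_indicator hs]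
    apply lintegral_congr
    intro u
    by_cases huO : u ∈ O <;> by_cases hus : u ∈ s <;>
      simp [Set.indicator_apply, huO, hus]
  rw [step1, step2, step3, step4, step5, step6, step7]


/-- Theorem 2.3: if `x_1,…,x_k` are independent pathway distributed variables with
parameters `a_j, q_j, η_j` and exponent parameter `ζ_j − 1`, and `(v_1,…,v_k)` has an
arbitrary joint density `f` on the positive orthant, independent of the `x_j`, then
the joint density of `u_j = v_j/x_j` is given by the pathway-extended multivariable
Kober representation of the first kind (2.8). -/
theorem pathway_kober1_density {k : ℕ} (hk : 1 ≤ k) (a q η ζ : Fin k → ℝ)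
    (ha : ∀ j, 0 < a j) (hq : ∀ j, q j < 1) (hη : ∀ j, 0 < η j) (hζ : ∀ j, 0 < ζ j)
    (f : (Fin k → ℝ) → ℝ) (hf_meas : Measurable f) (hf_nonneg : ∀ x, 0 ≤ f x)
    (hf_supp : ∀ x, ¬ (∀ j, 0 < x j) → f x = 0)
    (hf_int : ∫⁻ x, ENNReal.ofReal (f x) = 1) :
    Measure.map (fun p : (Fin k → ℝ) × (Fin k → ℝ) => fun j => p.2 j / p.1 j)
      ((volume.withDensity (fun x => ENNReal.ofReal
          (Set.indicator
            {x : Fin k → ℝ | ∀ j, 0 < x j ∧ x j < 1 / (a j * (1 - q j))}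
            (fun x => ∏ j, pathwayC' (a j) (q j) (η j) (ζ j) *
              (x j ^ (ζ j - 1) *
                (1 - a j * (1 - q j) * x j) ^ (η j / (1 - q j)))) x))).prod
        (volume.withDensity fun v => ENNReal.ofReal (f v)))
    = volume.withDensity fun u => ENNReal.ofReal
        (Set.indicator {u : Fin k → ℝ | ∀ j, 0 < u j}
          (fun u => (∏ j, pathwayC' (a j) (q j) (η j) (ζ j) *
              u j ^ (-ζ j - η j / (1 - q j) - 1)) *
            ∫ v in {v : Fin k → ℝ |
                ∀ j, 0 < v j ∧ v j < u j / (a j * (1 - q j))},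
              (∏ j, (u j - a j * (1 - q j) * v j) ^ (η j / (1 - q j)) *
                v j ^ ζ j) * f v) u) := by
  have hb : ∀ j, 0 < a j * (1 - q j) := fun j => mul_pos (ha j) (by linarith [hq j])
  have hp : ∀ j, 0 < η j / (1 - q j) := fun j => div_pos (hη j) (by linarith [hq j])
  have hc : ∀ j, 0 ≤ pathwayC' (a j) (q j) (η j) (ζ j) := by
    intro j
    unfold pathwayC'
    have h1 : 0 < (a j * (1 - q j)) ^ ζ j := Real.rpow_pos_of_pos (hb j) _
    have h2 : 0 < Real.Gamma (ζ j + η j / (1 - q j) + 1) :=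
      Real.Gamma_pos_of_pos (by linarith [hζ j, hp j])
    have h3 : 0 < Real.Gamma (ζ j) := Real.Gamma_pos_of_pos (hζ j)
    have h4 : 0 < Real.Gamma (η j / (1 - q j) + 1) := Real.Gamma_pos_of_pos (by linarith [hp j])
    positivity
  exact pathway_kober1_aux (fun j => a j * (1 - q j)) (fun j => η j / (1 - q j))
    (fun j => pathwayC' (a j) (q j) (η j) (ζ j)) ζ hb hp hζ hc f hf_meas hf_nonneg hf_supp hf_int
end

section
/- Let k ≥ 1 and let Φ : ℝ^k → ℝ^k be the map defined by Φ(y)_j = y_j · ∏_{i=1}^{j−1}(1 − y_i) for j = 1,…,k. Then Φ is differentiable, and for every y the determinant of its derivative (Jacobian determinant) equals ∏_{j=1}^{k}(1 − y_j)^{k−j}; in particular, on the open cube (0,1)^k the absolute value of the Jacobian determinant is ∏_{j=1}^{k−1}(1 − y_j)^{k−j}. -/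
open Set

/-- The map `Φ(y)_j = y_j ∏_{i<j} (1 − y_i)` (the inverse of
`y_j = x_j/(1−x_1−⋯−x_{j−1})`) is differentiable, its Jacobian determinant at `y`
equals `∏_{j=1}^k (1−y_j)^{k−j}`, and in particular on the open cube `(0,1)^k` the
absolute value of the Jacobian determinant equals the same product. -/
theorem jacobian_dirichlet_transform {k : ℕ} (hk : 1 ≤ k) :
    Differentiable ℝ
      (fun y : Fin k → ℝ => fun j => y j * ∏ i ∈ Finset.Iio j, (1 - y i)) ∧
    (∀ y : Fin k → ℝ,
      (fderiv ℝ (fun y : Fin k → ℝ =>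
          fun j => y j * ∏ i ∈ Finset.Iio j, (1 - y i)) y).det
        = ∏ j, (1 - y j) ^ (k - 1 - (j : ℕ))) ∧
    (∀ y : Fin k → ℝ, (∀ j, y j ∈ Set.Ioo (0 : ℝ) 1) →
      |(fderiv ℝ (fun y : Fin k → ℝ =>
          fun j => y j * ∏ i ∈ Finset.Iio j, (1 - y i)) y).det|
        = ∏ j, (1 - y j) ^ (k - 1 - (j : ℕ))) := by
  classical
  set L : (Fin k → ℝ) → ((Fin k → ℝ) →L[ℝ] (Fin k → ℝ)) := fun y =>
    ContinuousLinearMap.pi (fun j =>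
      y j • ∑ i ∈ Finset.Iio j,
          (∏ i' ∈ (Finset.Iio j).erase i, (1 - y i')) •
            (-(ContinuousLinearMap.proj i : (Fin k → ℝ) →L[ℝ] ℝ))
        + (∏ i ∈ Finset.Iio j, (1 - y i)) •
            (ContinuousLinearMap.proj j : (Fin k → ℝ) →L[ℝ] ℝ)) with hL
  have hat : ∀ y : Fin k → ℝ,
      HasFDerivAt (fun y : Fin k → ℝ => fun j => y j * ∏ i ∈ Finset.Iio j, (1 - y i))
        (L y) y := by
    intro y
    apply hasFDerivAt_pi.2
    intro j
    have h1 : HasFDerivAt (fun y : Fin k → ℝ => y j)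
        (ContinuousLinearMap.proj j : (Fin k → ℝ) →L[ℝ] ℝ) y := hasFDerivAt_apply j y
    have h2 : HasFDerivAt (fun y : Fin k → ℝ => ∏ i ∈ Finset.Iio j, (1 - y i))
        (∑ i ∈ Finset.Iio j, (∏ i' ∈ (Finset.Iio j).erase i, (1 - y i')) •
          (-(ContinuousLinearMap.proj i : (Fin k → ℝ) →L[ℝ] ℝ))) y := by
      refine HasFDerivAt.finset_prod (fun i _ => ?_)
      have h := (hasFDerivAt_const (1 : ℝ) y).sub (hasFDerivAt_apply (𝕜 := ℝ) i y)
      exact h.congr_fderiv (by simp)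
    exact h1.mul h2
  have hdet : ∀ y : Fin k → ℝ,
      (fderiv ℝ (fun y : Fin k → ℝ =>
          fun j => y j * ∏ i ∈ Finset.Iio j, (1 - y i)) y).det
        = ∏ j, (1 - y j) ^ (k - 1 - (j : ℕ)) := by
    intro y
    rw [(hat y).fderiv]
    have hM : ∀ i j : Fin k,
        LinearMap.toMatrix' (L y).toLinearMap i j
          = (L y) (Pi.single j 1) i := by
      intro i j
      rw [LinearMap.toMatrix'_apply]
      have hv : (fun j' => if j' = j then (1 : ℝ) else 0) = Pi.single j 1 := by
        funext j'
        simp [Pi.single_apply]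
      rfl
    have htri : Matrix.BlockTriangular (LinearMap.toMatrix' (L y).toLinearMap)
        OrderDual.toDual := by
      intro i j hij
      rw [hM]
      have hij' : i < j := hij
      simp only [hL, ContinuousLinearMap.pi_apply, ContinuousLinearMap.add_apply,
        ContinuousLinearMap.smul_apply, ContinuousLinearMap.sum_apply,
        ContinuousLinearMap.neg_apply, ContinuousLinearMap.proj_apply]
      rw [Pi.single_eq_of_ne (ne_of_lt hij')]
      rw [Finset.sum_eq_zero, smul_zero, smul_zero, add_zero]
      intro t ht
      have : t < i := Finset.mem_Iio.1 ht
      rw [Pi.single_eq_of_ne (ne_of_lt (this.trans hij')), neg_zero, smul_zero]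
    have hdiag : ∀ j : Fin k,
        LinearMap.toMatrix' (L y).toLinearMap j j = ∏ i ∈ Finset.Iio j, (1 - y i) := by
      intro j
      rw [hM]
      simp only [hL, ContinuousLinearMap.pi_apply, ContinuousLinearMap.add_apply,
        ContinuousLinearMap.smul_apply, ContinuousLinearMap.sum_apply,
        ContinuousLinearMap.neg_apply, ContinuousLinearMap.proj_apply]
      rw [Pi.single_eq_same, Finset.sum_eq_zero, smul_zero, zero_add, smul_eq_mul, mul_one]
      intro t ht
      have : t < j := Finset.mem_Iio.1 ht
      rw [Pi.single_eq_of_ne (ne_of_lt this), neg_zero, smul_zero]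
    have : (L y).det = ∏ j, ∏ i ∈ Finset.Iio j, (1 - y i) := by
      rw [ContinuousLinearMap.det, ← LinearMap.det_toMatrix',
        Matrix.det_of_lowerTriangular _ htri]
      exact Finset.prod_congr rfl fun j _ => hdiag j
    rw [this]
    rw [Finset.prod_comm' (t' := Finset.univ) (s' := fun i => Finset.Ioi i)
      (by intro x y; simp [Finset.mem_Iio, Finset.mem_Ioi])]
    refine Finset.prod_congr rfl fun i _ => ?_
    rw [Finset.prod_const, Fin.card_Ioi]
  refine ⟨fun y => (hat y).differentiableAt, hdet, fun y hy => ?_⟩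
  rw [hdet y, abs_of_nonneg]
  exact Finset.prod_nonneg fun j _ => pow_nonneg (by linarith [(hy j).2]) _
end

section
/- Let a > 0, η > 0, ζ > −1 and u > 0 be fixed real numbers. For q < 1 with a(1−q)u < 1, let f_q(u) = c_q · u^{ζ}[1 − a(1−q)u]^{η/(1−q)} with c_q = [a(1−q)]^{ζ+1} Γ(ζ + η/(1−q) + 2)/(Γ(ζ+1) Γ(η/(1−q) + 1)). Then as q → 1 from the left, f_q(u) converges to (aη)^{ζ+1} u^{ζ} e^{−aηu}/Γ(ζ+1), i.e. the pathway density converges pointwise on (0,∞) to the gamma density with shape parameter ζ+1 and rate parameter aη. -/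
open Filter Set
open Real Topology

lemma wendel_upper {x c : ℝ} (hx : 0 < x) (hc : 0 < c) (hc1 : c < 1) :
    Real.Gamma (x + c) ≤ Real.Gamma x * x ^ c := by
  have h := Real.Gamma_mul_add_mul_le_rpow_Gamma_mul_rpow_Gamma (s := x) (t := x + 1)
    (a := 1 - c) (b := c) hx (by linarith) (by linarith) hc (by ring)
  have harg : (1 - c) * x + c * (x + 1) = x + c := by ring
  rw [harg, Real.Gamma_add_one hx.ne'] at h
  have hΓ : 0 < Real.Gamma x := Real.Gamma_pos_of_pos hx
  calc Real.Gamma (x + c) ≤ Real.Gamma x ^ (1 - c) * (x * Real.Gamma x) ^ c := h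
    _ = Real.Gamma x * x ^ c := by
        rw [Real.mul_rpow hx.le hΓ.le, mul_comm (x ^ c), ← mul_assoc,
          ← Real.rpow_add hΓ]
        norm_num

lemma wendel_lower {x c : ℝ} (hx : 0 < x) (hc : 0 < c) (hc1 : c < 1) :
    x * Real.Gamma x ≤ Real.Gamma (x + c) * (x + c) ^ (1 - c) := by
  have hxc : 0 < x + c := by linarith
  have h := Real.Gamma_mul_add_mul_le_rpow_Gamma_mul_rpow_Gamma (s := x + c) (t := x + c + 1)
    (a := c) (b := 1 - c) hxc (by linarith) hc (by linarith) (by ring)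
  have harg : c * (x + c) + (1 - c) * (x + c + 1) = x + 1 := by ring
  rw [harg, Real.Gamma_add_one hxc.ne', Real.Gamma_add_one hx.ne'] at h
  have hΓ : 0 < Real.Gamma (x + c) := Real.Gamma_pos_of_pos hxc
  calc x * Real.Gamma x ≤ Real.Gamma (x + c) ^ c * ((x + c) * Real.Gamma (x + c)) ^ (1 - c) := h
    _ = Real.Gamma (x + c) * (x + c) ^ (1 - c) := by
        rw [Real.mul_rpow hxc.le hΓ.le, mul_comm ((x + c) ^ (1 - c)), ← mul_assoc,
          ← Real.rpow_add hΓ]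
        norm_num

lemma gamma_ratio_base {c : ℝ} (hc : 0 < c) (hc1 : c < 1) :
    Tendsto (fun x : ℝ => Real.Gamma (x + c) / (Real.Gamma x * x ^ c)) atTop (𝓝 1) := by
  have hfrac : Tendsto (fun x : ℝ => x / (x + c)) atTop (𝓝 1) := by
    have h0 : Tendsto (fun x : ℝ => c / (x + c)) atTop (𝓝 0) :=
      (tendsto_atTop_add_const_right _ c tendsto_id).const_div_atTop c
    have h1 : Tendsto (fun x : ℝ => 1 - c / (x + c)) atTop (𝓝 (1 - 0)) :=
      tendsto_const_nhds.sub h0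
    rw [sub_zero] at h1
    refine h1.congr' ?_
    filter_upwards [eventually_gt_atTop (0 : ℝ)] with x hx
    have : x + c ≠ 0 := by positivity
    field_simp
    ring
  have hlow : Tendsto (fun x : ℝ => (x / (x + c)) ^ (1 - c)) atTop (𝓝 1) := by
    have := hfrac.rpow_const (p := 1 - c) (Or.inl one_ne_zero)
    simpa using this
  refine tendsto_of_tendsto_of_tendsto_of_le_of_le' hlow tendsto_const_nhds ?_ ?_
  · filter_upwards [eventually_gt_atTop (0 : ℝ)] with x hx
    have hxc : 0 < x + c := by linarith
    have hΓ : 0 < Real.Gamma x := Real.Gamma_pos_of_pos hx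
    have hΓc : 0 < Real.Gamma (x + c) := Real.Gamma_pos_of_pos hxc
    have key := wendel_lower hx hc hc1
    rw [Real.div_rpow hx.le hxc.le, div_le_div_iff₀ (by positivity) (by positivity)]
    calc x ^ (1 - c) * (Real.Gamma x * x ^ c) = (x ^ (1 - c) * x ^ c) * Real.Gamma x := by ring
      _ = x * Real.Gamma x := by rw [← Real.rpow_add hx]; norm_num
      _ ≤ Real.Gamma (x + c) * (x + c) ^ (1 - c) := key
  · filter_upwards [eventually_gt_atTop (0 : ℝ)] with x hx
    have hΓ : 0 < Real.Gamma x := Real.Gamma_pos_of_pos hx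
    rw [div_le_one (by positivity)]
    exact wendel_upper hx hc hc1

lemma gamma_ratio_aux (n : ℕ) : ∀ c : ℝ, 0 < c → c ≤ n + 1 →
    Tendsto (fun x : ℝ => Real.Gamma (x + c) / (Real.Gamma x * x ^ c)) atTop (𝓝 1) := by
  induction n with
  | zero =>
    intro c hc hcle
    rcases lt_or_eq_of_le hcle with h | h
    · exact gamma_ratio_base hc (by norm_num at h; linarith)
    · subst h
      refine tendsto_const_nhds.congr' ?_
      filter_upwards [eventually_gt_atTop (0 : ℝ)] with x hx
      have hΓ : 0 < Real.Gamma x := Real.Gamma_pos_of_pos hx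
      norm_num
      field_simp
      rw [Real.Gamma_add_one hx.ne']
  | succ n ih =>
    intro c hc hcle
    by_cases h : c ≤ n + 1
    · exact ih c hc h
    · push_neg at h
      have h1 : 0 < c - 1 := by
        have hn0 : (0:ℝ) ≤ n := Nat.cast_nonneg n
        have : (1 : ℝ) ≤ n + 1 := by linarith
        linarith
      have h2 : c - 1 ≤ n + 1 := by push_cast at hcle ⊢; linarith
      have base := ih (c - 1) h1 h2
      have hquot : Tendsto (fun x : ℝ => (x + (c - 1)) / x) atTop (𝓝 1) := by
        have h0 : Tendsto (fun x : ℝ => (c - 1) / x) atTop (𝓝 0) :=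
          tendsto_id.const_div_atTop (c - 1)
        have h1' : Tendsto (fun x : ℝ => 1 + (c - 1) / x) atTop (𝓝 (1 + 0)) :=
          tendsto_const_nhds.add h0
        rw [add_zero] at h1'
        refine h1'.congr' ?_
        filter_upwards [eventually_gt_atTop (0 : ℝ)] with x hx
        field_simp
      have := base.mul hquot
      rw [mul_one] at this
      refine this.congr' ?_
      filter_upwards [eventually_gt_atTop (0 : ℝ)] with x hx
      have hxc : 0 < x + (c - 1) := by linarith
      have hΓ : 0 < Real.Gamma x := Real.Gamma_pos_of_pos hx
      have harg : x + c = (x + (c - 1)) + 1 := by ring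
      rw [harg, Real.Gamma_add_one hxc.ne']
      have hxpow : x ^ c = x ^ (c - 1) * x := by
        rw [← Real.rpow_add_one hx.ne']; ring_nf
      rw [hxpow]
      have h3 : (0:ℝ) < x ^ (c - 1) := Real.rpow_pos_of_pos hx _
      field_simp

lemma gamma_ratio (c : ℝ) (hc : 0 < c) :
    Tendsto (fun x : ℝ => Real.Gamma (x + c) / (Real.Gamma x * x ^ c)) atTop (𝓝 1) := by
  obtain ⟨n, hn⟩ := exists_nat_ge c
  exact gamma_ratio_aux n c hc (by push_cast; linarith)

/-- (1.18): for fixed `a > 0`, `η > 0`, `ζ > −1` and `u > 0`, the pathway density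
`f_q(u) = c_q u^ζ [1 − a(1−q)u]^{η/(1−q)}`, with
`c_q = [a(1−q)]^{ζ+1} Γ(ζ+η/(1−q)+2)/(Γ(ζ+1)Γ(η/(1−q)+1))`, converges as
`q → 1⁻` (through values with `a(1−q)u < 1`) to the gamma density
`(aη)^{ζ+1} u^ζ e^{−aηu}/Γ(ζ+1)` with shape `ζ+1` and rate `aη`. -/
theorem pathway_tendsto_gamma (a η ζ u : ℝ)
    (ha : 0 < a) (hη : 0 < η) (hζ : -1 < ζ) (hu : 0 < u) :
    Filter.Tendsto
      (fun q : ℝ =>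
        (a * (1 - q)) ^ (ζ + 1) * Real.Gamma (ζ + η / (1 - q) + 2) /
            (Real.Gamma (ζ + 1) * Real.Gamma (η / (1 - q) + 1)) *
          (u ^ ζ * (1 - a * (1 - q) * u) ^ (η / (1 - q))))
      (nhdsWithin 1 {q : ℝ | q < 1 ∧ a * (1 - q) * u < 1})
      (nhds ((a * η) ^ (ζ + 1) * u ^ ζ * Real.exp (-(a * η * u)) /
        Real.Gamma (ζ + 1))) := by
  set L := nhdsWithin (1:ℝ) {q : ℝ | q < 1 ∧ a * (1 - q) * u < 1} with hL
  have hmem : ∀ᶠ q in L, q < 1 ∧ a * (1 - q) * u < 1 := self_mem_nhdsWithin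
  have hx : Tendsto (fun q : ℝ => η / (1 - q)) L atTop := by
    have h1 : Tendsto (fun q : ℝ => 1 - q) L (nhdsWithin 0 (Ioi 0)) := by
      apply tendsto_nhdsWithin_of_tendsto_nhds_of_eventually_within
      · have h : Tendsto (fun q : ℝ => 1 - q) (nhds 1) (nhds (1 - 1)) :=
          (continuous_const.sub continuous_id).tendsto 1
        simpa using h.mono_left nhdsWithin_le_nhds
      · filter_upwards [hmem] with q hq
        exact sub_pos.mpr hq.1
    have h2 : Tendsto (fun y : ℝ => η / y) (nhdsWithin 0 (Ioi 0)) atTop := by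
      simpa [div_eq_mul_inv] using tendsto_inv_nhdsGT_zero.const_mul_atTop hη
    exact h2.comp h1
  have hxp1 : Tendsto (fun q : ℝ => η / (1 - q) + 1) L atTop :=
    tendsto_atTop_add_const_right _ 1 hx
  have hG1 : Tendsto (fun q : ℝ => Real.Gamma ((η / (1 - q) + 1) + (ζ + 1)) /
      (Real.Gamma (η / (1 - q) + 1) * (η / (1 - q) + 1) ^ (ζ + 1))) L (nhds 1) :=
    (gamma_ratio (ζ + 1) (by linarith)).comp hxp1
  have haη : (0:ℝ) < a * η := by positivity
  have hG2 : Tendsto (fun q : ℝ => (a * (η + (1 - q))) ^ (ζ + 1)) L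
      (nhds ((a * η) ^ (ζ + 1))) := by
    have hb : Tendsto (fun q : ℝ => a * (η + (1 - q))) L (nhds (a * η)) := by
      have h : Tendsto (fun q : ℝ => a * (η + (1 - q))) (nhds 1) (nhds (a * (η + (1 - 1)))) :=
        (Continuous.tendsto (by continuity) 1)
      simpa using h.mono_left nhdsWithin_le_nhds
    exact hb.rpow_const (Or.inl haη.ne')
  have hG3 : Tendsto (fun q : ℝ => (1 + (-(a * η * u)) / (η / (1 - q))) ^ (η / (1 - q))) L
      (nhds (Real.exp (-(a * η * u)))) :=
    (tendsto_one_add_div_rpow_exp (-(a * η * u))).comp hx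
  have hprod := ((hG1.mul hG2).mul hG3).mul_const (u ^ ζ / Real.Gamma (ζ + 1))
  have hval : 1 * (a * η) ^ (ζ + 1) * Real.exp (-(a * η * u)) * (u ^ ζ / Real.Gamma (ζ + 1))
      = (a * η) ^ (ζ + 1) * u ^ ζ * Real.exp (-(a * η * u)) / Real.Gamma (ζ + 1) := by
    ring
  rw [hval] at hprod
  refine hprod.congr' ?_
  filter_upwards [hmem] with q hq
  obtain ⟨hq1, hq2⟩ := hq
  have ht : 0 < 1 - q := by linarith
  set x := η / (1 - q) with hxdef
  have hxpos : 0 < x := by positivity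
  have hat : 0 < a * (1 - q) := by positivity
  have h1atu : 0 < 1 - a * (1 - q) * u := by linarith
  have hΓx : 0 < Real.Gamma (x + 1) := Real.Gamma_pos_of_pos (by linarith)
  have hΓζ : 0 < Real.Gamma (ζ + 1) := Real.Gamma_pos_of_pos (by linarith)
  have hxp : (0:ℝ) < (x + 1) ^ (ζ + 1) := Real.rpow_pos_of_pos (by linarith) _
  have e1 : (x + 1) + (ζ + 1) = ζ + x + 2 := by ring
  have e2 : a * (η + (1 - q)) = (a * (1 - q)) * (x + 1) := by
    rw [hxdef]; field_simp
  have e3 : 1 + (-(a * η * u)) / x = 1 - a * (1 - q) * u := by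
    rw [hxdef]; field_simp; ring
  rw [e1, e2, e3, Real.mul_rpow hat.le (by linarith : (0:ℝ) ≤ x + 1)]
  field_simp
end
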